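/- arXiv:math/0312461 — 2 statements merged into one kernel-verified Lean document; each statement's English description precedes it below -/
import Mathlib

section
/- For a state p of the box ball system, the quantity E_l(p) = −Σ_{j=1}^L H(b^{(j−1)} ⊗ b_j) is a nonnegative integer and does not depend on the size L of the system (provided L is sufficiently large compared with the support of p). -/
/-- A semistandard rectangular tableau with `k` rows, `l` columns and entries in `{1,…,n}`:
rows weakly increase left to right, columns strictly increase top to bottom. -/
structure RectTableau (n k l : ℕ) where
  entry : Fin k → Fin l → ℕ
  entry_pos : ∀ i j, 1 ≤ entry i j
  entry_le : ∀ i j, entry i j ≤ n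
  row_mono : ∀ i, Monotone (entry i)
  col_strict : ∀ j, StrictMono fun i => entry i j

namespace BBS

open scoped Classical

variable {n k l k' l' d d1 d2 : ℕ}

/-- The rows of a tableau, from top to bottom, each read left to right. -/
def toRows (x : RectTableau n k l) : List (List ℕ) :=
  (List.finRange k).map fun i => (List.finRange l).map fun j => x.entry i j

/-- The row word of a tableau: rows read left to right, bottom row first. -/
def rowWord (x : RectTableau n k l) : List ℕ :=
  ((List.finRange k).reverse).flatMap fun i => (List.finRange l).map fun j => x.entry i j

/-- Schensted row insertion of a single letter into a tableau (given as a list of rows). -/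
def rowInsertOne : List (List ℕ) → ℕ → List (List ℕ)
  | [], a => [[a]]
  | r :: rest, a =>
    match r.findIdx? (fun x => decide (a < x)) with
    | none => (r ++ [a]) :: rest
    | some idx => (r.set idx a) :: rowInsertOne rest (r.getD idx 0)

/-- Schensted row insertion of a word (leftmost letter first). -/
def rowInsertWord (T : List (List ℕ)) (w : List ℕ) : List (List ℕ) :=
  w.foldl rowInsertOne T

/-- The combinatorial `R`-matrix `B^{k,l} ⊗ B^{k',l'} → B^{k',l'} ⊗ B^{k,l}`, defined through
its row-insertion characterization: `x ⊗ y ↦ x̃ ⊗ ỹ` where `y ← row(x) = ỹ ← row(x̃)`. -/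
noncomputable def combR (x : RectTableau n k l) (y : RectTableau n k' l') :
    RectTableau n k' l' × RectTableau n k l :=
  if h : ∃ p : RectTableau n k' l' × RectTableau n k l,
      rowInsertWord (toRows p.2) (rowWord p.1) = rowInsertWord (toRows y) (rowWord x)
  then h.choose else (y, x)

/-- The number of boxes of a tableau strictly east of the `c`-th column. -/
def eastCount (T : List (List ℕ)) (c : ℕ) : ℕ := (T.map fun r => r.length - c).sum

/-- The energy function `H` on `B^{k,l} ⊗ B^{k',l'}`. -/
def energyH (x : RectTableau n k l) (y : RectTableau n k' l') : ℤ :=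
  (eastCount (rowInsertWord (toRows y) (rowWord x)) (max l l') : ℤ)
    - (min k k' : ℤ) * (min l l' : ℤ)

/-- The tableau `c_l = 1_k^l` all of whose columns are `(1,2,…,k)ᵗ`. -/
def constTab (n k l : ℕ) (h : k ≤ n) : RectTableau n k l where
  entry i _ := i.1 + 1
  entry_pos := by intro i j; (try dsimp only); omega
  entry_le := by intro i j; have := i.isLt; (try dsimp only); omega
  row_mono := fun _ => monotone_const
  col_strict := by
    intro j a b hab
    have h3 : a.1 < b.1 := hab
    dsimp only; omega

/-- Passing the carrier `c ∈ B^{k,l}` through a sequence of boxes by iterating the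
combinatorial `R : B^{k,l} ⊗ B^{k,1} → B^{k,1} ⊗ B^{k,l}`. -/
noncomputable def carrierPass : RectTableau n k l → List (RectTableau n k 1) →
    List (RectTableau n k 1) × RectTableau n k l
  | c, [] => ([], c)
  | c, b :: rest =>
    let bc := combR c b
    let rc := carrierPass bc.2 rest
    (bc.1 :: rc.1, rc.2)

/-- The box ball time evolution `T_l`. -/
noncomputable def timeEv (h : k ≤ n) (l : ℕ) (p : List (RectTableau n k 1)) :
    List (RectTableau n k 1) :=
  (carrierPass (constTab n k l h) p).1

/-- `∑_j H(b^{(j-1)} ⊗ b_j)` along a carrier pass. -/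
noncomputable def energySum : RectTableau n k l → List (RectTableau n k 1) → ℤ
  | _, [] => 0
  | c, b :: rest => energyH c b + energySum (combR c b).2 rest

/-- The conserved quantity `E_l(p) = -∑_j H(b^{(j-1)} ⊗ b_j)`. -/
noncomputable def bbsE (h : k ≤ n) (l : ℕ) (p : List (RectTableau n k 1)) : ℤ :=
  - energySum (constTab n k l h) p

/-- The word used in the signature rule: columns from right to left, each read top to bottom. -/
def sigWord (x : RectTableau n k l) : List ℕ :=
  ((List.finRange l).reverse).flatMap fun j => (List.finRange k).map fun i => x.entry i j

/-- The positions of the unpaired `-`'s (letters `i+1`) and unpaired `+`'s (letters `i`) of a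
word, after repeatedly deleting adjacent `+-` pairs.  The first component lists the unpaired
`-` positions in increasing order; the second lists the unpaired `+` positions in
decreasing order. -/
def sigUnpaired (i : ℕ) (w : List ℕ) : List ℕ × List ℕ :=
  (w.zipIdx.map Prod.swap).foldl (fun mp x =>
    if x.2 = i then (mp.1, x.1 :: mp.2)
    else if x.2 = i + 1 then
      match mp.2 with
      | [] => (mp.1 ++ [x.1], [])
      | _ :: rest => (mp.1, rest)
    else mp) ([], [])

/-- The Kashiwara operator `e_i` on words, via the signature rule. -/
def eWord (i : ℕ) (w : List ℕ) : Option (List ℕ) :=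
  match (sigUnpaired i w).1.getLast? with
  | none => none
  | some p => some (w.set p i)

/-- The Kashiwara operator `f_i` on words, via the signature rule. -/
def fWord (i : ℕ) (w : List ℕ) : Option (List ℕ) :=
  match (sigUnpaired i w).2.getLast? with
  | none => none
  | some p => some (w.set p (i + 1))

/-- Kashiwara operator `e_i` on a two-fold tensor product of rectangular tableaux. -/
noncomputable def eTen (i : ℕ) (p : RectTableau n k l × RectTableau n k' l') :
    Option (RectTableau n k l × RectTableau n k' l') :=
  match eWord i (sigWord p.1 ++ sigWord p.2) with
  | none => none
  | some w =>
    if h : ∃ q : RectTableau n k l × RectTableau n k' l',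
        sigWord q.1 ++ sigWord q.2 = w then some h.choose else none

/-- Kashiwara operator `f_i` on a two-fold tensor product of rectangular tableaux. -/
noncomputable def fTen (i : ℕ) (p : RectTableau n k l × RectTableau n k' l') :
    Option (RectTableau n k l × RectTableau n k' l') :=
  match fWord i (sigWord p.1 ++ sigWord p.2) with
  | none => none
  | some w =>
    if h : ∃ q : RectTableau n k l × RectTableau n k' l',
        sigWord q.1 ++ sigWord q.2 = w then some h.choose else none

/-- Kashiwara operator `e_i` on `(B^{k,1})^{⊗L}`. -/
noncomputable def eList (i : ℕ) (p : List (RectTableau n k 1)) :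
    Option (List (RectTableau n k 1)) :=
  match eWord i (p.flatMap sigWord) with
  | none => none
  | some w =>
    if h : ∃ q : List (RectTableau n k 1), q.length = p.length ∧ q.flatMap sigWord = w
    then some h.choose else none

/-- Kashiwara operator `f_i` on `(B^{k,1})^{⊗L}`. -/
noncomputable def fList (i : ℕ) (p : List (RectTableau n k 1)) :
    Option (List (RectTableau n k 1)) :=
  match fWord i (p.flatMap sigWord) with
  | none => none
  | some w =>
    if h : ∃ q : List (RectTableau n k 1), q.length = p.length ∧ q.flatMap sigWord = w
    then some h.choose else none

/-- Elementary Knuth transformations. -/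
inductive KnuthStep : List ℕ → List ℕ → Prop where
  | xzy (u v : List ℕ) (x y z : ℕ) (h1 : x ≤ y) (h2 : y < z) :
      KnuthStep (u ++ x :: z :: y :: v) (u ++ z :: x :: y :: v)
  | yxz (u v : List ℕ) (x y z : ℕ) (h1 : x < y) (h2 : y ≤ z) :
      KnuthStep (u ++ y :: x :: z :: v) (u ++ y :: z :: x :: v)

/-- Knuth equivalence of words. -/
def KnuthEquiv : List ℕ → List ℕ → Prop := Relation.EqvGen KnuthStep

/-- The column `(1,…,k-2,m,b)ᵗ ∈ B^{k,1}` (where `m` sits in row `k-1` and `b` in row `k`). -/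
def mkCol (n k m b : ℕ) (hm : k ≤ m + 1) (hb : m < b) (hn : b ≤ n) : RectTableau n k 1 where
  entry i _ := if i.1 + 1 = k then b else if i.1 + 2 = k then m else i.1 + 1
  entry_pos := by intro i j; (try dsimp only); split_ifs <;> omega
  entry_le := by intro i j; have := i.isLt; (try dsimp only); split_ifs <;> omega
  row_mono := fun _ => monotone_const
  col_strict := by
    intro j a b' hab
    have h1 := a.isLt; have h2 := b'.isLt
    have h3 : a.1 < b'.1 := hab
    dsimp only; split_ifs <;> omega

/-- `[𝟎] = (1,…,k-1,k)ᵗ`. -/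
def col0 (n k : ℕ) (hk : 1 ≤ k) (h : k ≤ n) : RectTableau n k 1 :=
  mkCol n k (k-1) k (by omega) (by omega) h
/-- `[𝟏] = (1,…,k-1,k+1)ᵗ`. -/
def col1 (n k : ℕ) (hk : 1 ≤ k) (h : k + 1 ≤ n) : RectTableau n k 1 :=
  mkCol n k (k-1) (k+1) (by omega) (by omega) h
/-- `[𝟐₊] = (1,…,k-2,k,k+1)ᵗ`. -/
def col2p (n k : ℕ) (hk : 1 ≤ k) (h : k + 1 ≤ n) : RectTableau n k 1 :=
  mkCol n k k (k+1) (by omega) (by omega) h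
/-- `[𝟐₋] = (1,…,k-2,k-1,k+2)ᵗ`. -/
def col2m (n k : ℕ) (hk : 1 ≤ k) (h : k + 2 ≤ n) : RectTableau n k 1 :=
  mkCol n k (k-1) (k+2) (by omega) (by omega) h
/-- `[𝟑] = (1,…,k-2,k,k+2)ᵗ`. -/
def col3 (n k : ℕ) (hk : 1 ≤ k) (h : k + 2 ≤ n) : RectTableau n k 1 :=
  mkCol n k k (k+2) (by omega) (by omega) h
/-- `[𝟒] = (1,…,k-2,k+1,k+2)ᵗ`. -/
def col4 (n k : ℕ) (hk : 1 ≤ k) (h : k + 2 ≤ n) : RectTableau n k 1 :=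
  mkCol n k (k+1) (k+2) (by omega) (by omega) h

/-- `ξ_i = [𝟎^{l-i} 𝟏^i] ∈ B^{k,l}`: the first `l-i` columns equal `[𝟎]`, the last `i`
columns equal `[𝟏]`. -/
def xiTab (n k l i : ℕ) (hk : 1 ≤ k) (hkn : k < n) : RectTableau n k l where
  entry r j := if r.1 + 1 = k ∧ l - i ≤ j.1 then k + 1 else r.1 + 1
  entry_pos := by intro r j; (try dsimp only); split_ifs <;> omega
  entry_le := by intro r j; have := r.isLt; (try dsimp only); split_ifs <;> omega
  row_mono := by
    intro r a b hab
    have h3 : a.1 ≤ b.1 := hab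
    dsimp only; split_ifs <;> omega
  col_strict := by
    intro j a b hab
    have h1 := a.isLt; have h2 := b.isLt
    have h3 : a.1 < b.1 := hab
    dsimp only; split_ifs <;> omega

/-- The rectangular tableau `[𝟏^a 𝟐_s^{ab-a} 𝟑^{d-ab}] ∈ B^{k,d}` whose first `a` columns are
`[𝟏]`, whose next columns (up to column `ab`) are `[𝟐₊]` (if `s`) or `[𝟐₋]` (if `¬s`), and
whose remaining columns are `[𝟑]`. -/
def pat3 (n k d a ab : ℕ) (s : Bool) (hk : 2 ≤ k) (hn : k + 2 ≤ n) : RectTableau n k d where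
  entry i j :=
    if i.1 + 1 = k then
      (if j.1 < a then k+1 else if j.1 < ab then (if s then k+1 else k+2) else k+2)
    else if i.1 + 2 = k then
      (if j.1 < a then k-1 else if j.1 < ab then (if s then k else k-1) else k)
    else i.1 + 1
  entry_pos := by intro i j; (try dsimp only); split_ifs <;> omega
  entry_le := by intro i j; have := i.isLt; (try dsimp only); split_ifs <;> omega
  row_mono := by
    intro i a' b' hab
    have h3 : a'.1 ≤ b'.1 := hab
    dsimp only; split_ifs <;> omega
  col_strict := by
    intro j a' b' hab
    have h1 := a'.isLt; have h2 := b'.isLt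
    have h3 : a'.1 < b'.1 := hab
    dsimp only; split_ifs <;> omega

/-- The `k`-th (bottom) row of a rectangular tableau, as an element of `B^{1,d}`. -/
def rowK (hk : 1 ≤ k) (u : RectTableau n k d) : RectTableau n 1 d where
  entry _ j := u.entry ⟨k - 1, by omega⟩ j
  entry_pos := fun _ j => u.entry_pos _ j
  entry_le := fun _ j => u.entry_le _ j
  row_mono := fun _ => u.row_mono _
  col_strict := by
    intro j a b hab
    have h3 : a.1 < b.1 := hab
    have h1 := a.isLt; have h2 := b.isLt
    exact absurd h3 (by omega)

/-- The first `k-1` rows of a rectangular tableau, as an element of `B^{k-1,d}`. -/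
def rowsLt (u : RectTableau n k d) : RectTableau n (k-1) d where
  entry i j := u.entry (Fin.castLE (Nat.sub_le k 1) i) j
  entry_pos := fun i j => u.entry_pos _ j
  entry_le := fun i j => u.entry_le _ j
  row_mono := fun i => u.row_mono _
  col_strict := by
    intro j a b hab
    exact u.col_strict j (show Fin.castLE (Nat.sub_le k 1) a < Fin.castLE (Nat.sub_le k 1) b from hab)

/-- The soliton conditions on a sequence of columns `S = (b_1,…,b_d)`, `b_j ∈ B^{k,1}`:
entries weakly decrease along each row of the sequence, the entry in row `k-1` of each
column is `≤ k` and the entry in row `k` is `> k`.  (Strict increase down each column is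
already part of the tableau structure.) -/
def IsSolitonFn {n k d : ℕ} (S : Fin d → RectTableau n k 1) : Prop :=
  (∀ j j' : Fin d, j.1 + 1 = j'.1 → ∀ (i : Fin k) (t : Fin 1),
      (S j').entry i t ≤ (S j).entry i t) ∧
  (∀ (j : Fin d) (i : Fin k) (t : Fin 1), i.1 + 1 = k → k < (S j).entry i t) ∧
  (∀ (j : Fin d) (i : Fin k) (t : Fin 1), i.1 + 2 = k → (S j).entry i t ≤ k)

/-- `lo` and `hi` are the two pieces `u_{<k} ∈ B^{k-1,d}` and `u_k ∈ B^{1,d}` of the internal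
degree of freedom `u = [b_d,…,b_1] ∈ B^{k,d}` of the soliton `S = (b_1,…,b_d)`. -/
def SplitDof {n k d : ℕ} (hk : 1 ≤ k) (S : Fin d → RectTableau n k 1)
    (lo : RectTableau n (k-1) d) (hi : RectTableau n 1 d) : Prop :=
  (∀ (i : Fin (k-1)) (j : Fin d),
      lo.entry i j = (S j.rev).entry (Fin.castLE (Nat.sub_le k 1) i) ⟨0, Nat.one_pos⟩) ∧
  (∀ (t : Fin 1) (j : Fin d),
      hi.entry t j = (S j.rev).entry ⟨k - 1, by omega⟩ ⟨0, Nat.one_pos⟩)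

/-- `(lo, hi) ∈ B^{k-1,d} × B^{1,d}` is the split internal degree of freedom of a soliton:
the entries of `lo` lie in `{1,…,k}` and those of `hi` in `{k+1,…,n}`. -/
def IsDof (k : ℕ) {n d : ℕ} (lo : RectTableau n (k-1) d) (hi : RectTableau n 1 d) : Prop :=
  (∀ i j, lo.entry i j ≤ k) ∧ (∀ t j, k < hi.entry t j)

/-- The two-body scattering map `R̃` on solitons with phases: internal degrees of freedom are
exchanged by the product of combinatorial `R`-matrices and the phases shift by
`δ = 2 d₂ + H(u_k ⊗ v_k) + H(u_{<k} ⊗ v_{<k})`. -/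
noncomputable def Rtilde {n k d1 d2 : ℕ}
    (a : ℤ × RectTableau n (k-1) d1 × RectTableau n 1 d1)
    (b : ℤ × RectTableau n (k-1) d2 × RectTableau n 1 d2) :
    (ℤ × RectTableau n (k-1) d2 × RectTableau n 1 d2)
      × (ℤ × RectTableau n (k-1) d1 × RectTableau n 1 d1) :=
  ((b.1 - (2 * (d2:ℤ) + energyH a.2.2 b.2.2 + energyH a.2.1 b.2.1),
      (combR a.2.1 b.2.1).1, (combR a.2.2 b.2.2).1),
   (a.1 + (2 * (d2:ℤ) + energyH a.2.2 b.2.2 + energyH a.2.1 b.2.1),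
      (combR a.2.1 b.2.1).2, (combR a.2.2 b.2.2).2))

end BBS
namespace BBSAux
open BBS

/-! ### Basic facts about `rowInsertOne` -/

/-- Head-level insertion step. -/
def hstep (r : List ℕ) (a : ℕ) : List ℕ :=
  match r.findIdx? (fun x => decide (a < x)) with
  | none => r ++ [a]
  | some idx => r.set idx a

/-- The sequence of letters bumped out of the first row. -/
def bumpSeq : List ℕ → List ℕ → List ℕ
  | _, [] => []
  | r, a :: w =>
    match r.findIdx? (fun x => decide (a < x)) with
    | none => bumpSeq (r ++ [a]) w
    | some idx => r.getD idx 0 :: bumpSeq (r.set idx a) w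

lemma rowInsertOne_nil (a : ℕ) : rowInsertOne [] a = [[a]] := rfl

lemma rowInsertOne_cons_none {r : List ℕ} {a : ℕ} (rest : List (List ℕ))
    (h : r.findIdx? (fun x => decide (a < x)) = none) :
    rowInsertOne (r :: rest) a = (r ++ [a]) :: rest := by
  simp [rowInsertOne, h]

lemma rowInsertOne_cons_some {r : List ℕ} {a idx : ℕ} (rest : List (List ℕ))
    (h : r.findIdx? (fun x => decide (a < x)) = some idx) :
    rowInsertOne (r :: rest) a = (r.set idx a) :: rowInsertOne rest (r.getD idx 0) := by
  simp [rowInsertOne, h]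

lemma hstep_none {r : List ℕ} {a : ℕ} (h : r.findIdx? (fun x => decide (a < x)) = none) :
    hstep r a = r ++ [a] := by simp [hstep, h]

lemma hstep_some {r : List ℕ} {a idx : ℕ} (h : r.findIdx? (fun x => decide (a < x)) = some idx) :
    hstep r a = r.set idx a := by simp [hstep, h]

lemma bumpSeq_nil (r : List ℕ) : bumpSeq r [] = [] := rfl

lemma bumpSeq_cons_none {r : List ℕ} {a : ℕ} (w : List ℕ)
    (h : r.findIdx? (fun x => decide (a < x)) = none) :
    bumpSeq r (a :: w) = bumpSeq (r ++ [a]) w := by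
  simp [bumpSeq, h]

lemma bumpSeq_cons_some {r : List ℕ} {a idx : ℕ} (w : List ℕ)
    (h : r.findIdx? (fun x => decide (a < x)) = some idx) :
    bumpSeq r (a :: w) = r.getD idx 0 :: bumpSeq (r.set idx a) w := by
  simp [bumpSeq, h]

/-- Decomposition of the full insertion into head evolution and the rest. -/
lemma foldl_insert_cons (w : List ℕ) : ∀ (r : List ℕ) (rest : List (List ℕ)),
    List.foldl rowInsertOne (r :: rest) w
      = List.foldl hstep r w :: List.foldl rowInsertOne rest (bumpSeq r w) := by
  induction w with
  | nil => intro r rest; simp [bumpSeq_nil]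
  | cons a w ih =>
    intro r rest
    rcases hf : r.findIdx? (fun x => decide (a < x)) with _ | idx
    · rw [List.foldl_cons, rowInsertOne_cons_none rest hf, ih, bumpSeq_cons_none w hf,
        List.foldl_cons, hstep_none hf]
    · rw [List.foldl_cons, rowInsertOne_cons_some rest hf, ih, bumpSeq_cons_some w hf,
        List.foldl_cons, hstep_some hf, List.foldl_cons]

lemma bumpSeq_append (w₁ : List ℕ) : ∀ (w₂ r : List ℕ),
    bumpSeq r (w₁ ++ w₂) = bumpSeq r w₁ ++ bumpSeq (List.foldl hstep r w₁) w₂ := by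
  induction w₁ with
  | nil => intro w₂ r; simp [bumpSeq_nil]
  | cons a w ih =>
    intro w₂ r
    rcases hf : r.findIdx? (fun x => decide (a < x)) with _ | idx
    · rw [List.cons_append, bumpSeq_cons_none _ hf, ih, List.foldl_cons, hstep_none hf,
        bumpSeq_cons_none _ hf]
    · rw [List.cons_append, bumpSeq_cons_some _ hf, ih, List.foldl_cons, hstep_some hf,
        bumpSeq_cons_some _ hf, List.cons_append]

lemma headD_rowInsertOne (T : List (List ℕ)) (a : ℕ) :
    (rowInsertOne T a).headD [] = hstep (T.headD []) a := by
  cases T with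
  | nil =>
    have : ([] : List ℕ).findIdx? (fun x => decide (a < x)) = none := rfl
    simp [rowInsertOne_nil, hstep_none this]
  | cons r rest =>
    rcases hf : r.findIdx? (fun x => decide (a < x)) with _ | idx
    · rw [rowInsertOne_cons_none rest hf]; simp [hstep_none hf]
    · rw [rowInsertOne_cons_some rest hf]; simp [hstep_some hf]

lemma head?_rowInsertOne (T : List (List ℕ)) (a : ℕ) :
    (rowInsertOne T a).head? = some (hstep (T.headD []) a) := by
  cases T with
  | nil =>
    have h0 : ([] : List ℕ).findIdx? (fun x => decide (a < x)) = none := rfl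
    rw [rowInsertOne_nil]
    simp [hstep_none h0]
  | cons r rest =>
    rcases hf : r.findIdx? (fun x => decide (a < x)) with _ | idx
    · rw [rowInsertOne_cons_none rest hf]; simp [hstep_none hf]
    · rw [rowInsertOne_cons_some rest hf]; simp [hstep_some hf]

lemma headD_fold (w : List ℕ) : ∀ (T : List (List ℕ)),
    (List.foldl rowInsertOne T w).headD [] = List.foldl hstep (T.headD []) w := by
  induction w with
  | nil => intro T; rfl
  | cons a w ih => intro T; rw [List.foldl_cons, ih, headD_rowInsertOne, List.foldl_cons]

lemma sumLen_insert (T : List (List ℕ)) : ∀ (a : ℕ),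
    ((rowInsertOne T a).map List.length).sum = (T.map List.length).sum + 1 := by
  induction T with
  | nil => intro a; simp [rowInsertOne_nil]
  | cons r rest ih =>
    intro a
    rcases hf : r.findIdx? (fun x => decide (a < x)) with _ | idx
    · rw [rowInsertOne_cons_none rest hf]; simp; omega
    · rw [rowInsertOne_cons_some rest hf]; simp [ih]; omega

lemma sumLen_fold (w : List ℕ) : ∀ (T : List (List ℕ)),
    ((List.foldl rowInsertOne T w).map List.length).sum = (T.map List.length).sum + w.length := by
  induction w with
  | nil => intro T; simp
  | cons a w ih => intro T; rw [List.foldl_cons, ih, sumLen_insert]; simp; omega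

end BBSAux
namespace BBSAux
open BBS

/-! ### getD helpers -/

lemma getD_set (r : List ℕ) (i j a : ℕ) :
    (r.set i a).getD j 0 = if i = j ∧ j < r.length then a else r.getD j 0 := by
  by_cases hj : j < r.length
  · rw [List.getD_eq_getElem _ _ (by simpa using hj), List.getElem_set]
    by_cases hij : i = j
    · simp [hij, hj]
    · simp only [hij, false_and, if_false]
      rw [List.getD_eq_getElem _ _ hj]
  · rw [List.getD_eq_default _ _ (by simpa using Nat.le_of_not_lt hj),
      List.getD_eq_default _ _ (Nat.le_of_not_lt hj)]
    simp [hj]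

lemma getD_append_lt (r s : List ℕ) (j : ℕ) (h : j < r.length) :
    (r ++ s).getD j 0 = r.getD j 0 := List.getD_append r s 0 j h

lemma getD_mem (r : List ℕ) (j : ℕ) (h : j < r.length) : r.getD j 0 ∈ r := by
  rw [List.getD_eq_getElem _ _ h]; exact List.getElem_mem h

/-- findIdx? specification, getD version. -/
lemma findIdx?_spec {r : List ℕ} {a idx : ℕ}
    (h : r.findIdx? (fun x => decide (a < x)) = some idx) :
    idx < r.length ∧ a < r.getD idx 0 ∧ ∀ q, q < idx → r.getD q 0 ≤ a := by
  rw [List.findIdx?_eq_some_iff_getElem] at h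
  obtain ⟨hlt, hp, hbef⟩ := h
  refine ⟨hlt, by rw [List.getD_eq_getElem _ _ hlt]; simpa using hp, ?_⟩
  intro q hq
  have := hbef q (by omega)
  rw [List.getD_eq_getElem _ _ (by omega)]
  simpa using this

lemma findIdx?_none_iff {r : List ℕ} {a : ℕ} :
    r.findIdx? (fun x => decide (a < x)) = none ↔ ∀ x ∈ r, x ≤ a := by
  rw [List.findIdx?_eq_none_iff]
  constructor
  · intro h x hx; have := h x hx; simpa using this
  · intro h x hx; simpa using h x hx

lemma findIdx?_eq_some_of {r : List ℕ} {a j : ℕ} (hj : j < r.length)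
    (hp : a < r.getD j 0) (hbef : ∀ q, q < j → r.getD q 0 ≤ a) :
    ∃ idx, r.findIdx? (fun x => decide (a < x)) = some idx ∧ idx ≤ j := by
  rcases hf : r.findIdx? (fun x => decide (a < x)) with _ | idx
  · rw [findIdx?_none_iff] at hf
    exact absurd hp (by simpa using hf _ (getD_mem r j hj))
  · refine ⟨idx, rfl, ?_⟩
    obtain ⟨h1, h2, h3⟩ := findIdx?_spec hf
    by_contra hc
    exact absurd hp (not_lt.mpr (h3 j (by omega)))

/-! ### Sortedness via getD -/

def SortedR (r : List ℕ) : Prop := ∀ i, i + 1 < r.length → r.getD i 0 ≤ r.getD (i+1) 0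

lemma sortedR_mono {r : List ℕ} (h : SortedR r) :
    ∀ i j, i ≤ j → j < r.length → r.getD i 0 ≤ r.getD j 0 := by
  intro i j hij hj
  induction j with
  | zero =>
    have h0 : i = 0 := by omega
    subst h0
    exact le_refl _
  | succ m ih =>
    rcases Nat.eq_or_lt_of_le hij with h1 | h1
    · rw [h1]
    · exact le_trans (ih (by omega) (by omega)) (h m hj)

/-! ### Tableau predicate -/

def dom (r s : List ℕ) : Prop :=
  s.length ≤ r.length ∧ ∀ j, j < s.length → r.getD j 0 < s.getD j 0

lemma dom_trans : Transitive dom := by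
  intro r s t hrs hst
  obtain ⟨h1, h2⟩ := hrs
  obtain ⟨h3, h4⟩ := hst
  exact ⟨le_trans h3 h1, fun j hj => lt_trans (h2 j (lt_of_lt_of_le hj h3)) (h4 j hj)⟩

instance : IsTrans (List ℕ) dom := ⟨dom_trans⟩

def Tab (T : List (List ℕ)) : Prop := (∀ r ∈ T, SortedR r) ∧ T.IsChain dom

lemma tab_nil : Tab [] := ⟨by simp, by simp⟩

lemma tab_singleton (a : ℕ) : Tab [[a]] := by
  constructor
  · intro r hr; simp at hr; subst hr; intro i hi; simp at hi
  · simp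

lemma tab_tail {r : List ℕ} {rest : List (List ℕ)} (h : Tab (r :: rest)) : Tab rest :=
  ⟨fun s hs => h.1 s (List.mem_cons_of_mem _ hs), (List.isChain_cons.mp h.2).2⟩

lemma tab_dom_head {r : List ℕ} {rest : List (List ℕ)} (h : Tab (r :: rest)) :
    ∀ y ∈ rest.head?, dom r y := (List.isChain_cons.mp h.2).1

/-- All row lengths are bounded by the head length. -/
lemma tab_len_le_head {T : List (List ℕ)} (h : Tab T) :
    ∀ r ∈ T, r.length ≤ (T.headD []).length := by
  cases T with
  | nil => simp
  | cons r₀ rest =>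
    intro r hr
    rcases List.mem_cons.mp hr with h1 | h1
    · subst h1; rfl
    · have hp : List.Pairwise dom (r₀ :: rest) := List.isChain_iff_pairwise.mp h.2
      exact ((List.pairwise_cons.mp hp).1 r h1).1

/-! ### Bumping: `rowInsertOne` preserves `Tab` -/

lemma sortedR_append {r : List ℕ} {a : ℕ} (hr : SortedR r) (hall : ∀ x ∈ r, x ≤ a) :
    SortedR (r ++ [a]) := by
  intro i hi
  simp only [List.length_append, List.length_cons, List.length_nil] at hi
  by_cases h1 : i + 1 < r.length
  · rw [getD_append_lt _ _ _ (by omega), getD_append_lt _ _ _ h1]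
    exact hr i h1
  · have hi1 : i + 1 = r.length := by omega
    rw [getD_append_lt _ _ _ (by omega), List.getD_append_right _ _ _ _ (by omega)]
    simp only [hi1, Nat.sub_self]
    exact hall _ (getD_mem r i (by omega))

lemma sortedR_set {r : List ℕ} {idx a : ℕ} (hr : SortedR r) (hidx : idx < r.length)
    (ha : a < r.getD idx 0) (hbef : ∀ q, q < idx → r.getD q 0 ≤ a) :
    SortedR (r.set idx a) := by
  intro i hi
  simp only [List.length_set] at hi
  rw [getD_set, getD_set]
  by_cases h1 : idx = i
  · rw [if_pos ⟨h1, by omega⟩, if_neg (by omega)]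
    exact le_trans (le_of_lt (h1 ▸ ha)) (hr i hi)
  · rw [if_neg (by tauto)]
    by_cases h2 : idx = i + 1
    · rw [if_pos ⟨h2, by omega⟩]
      exact hbef i (by omega)
    · rw [if_neg (by tauto)]
      exact hr i hi

lemma dom_append_right {r s : List ℕ} {a : ℕ} (h : dom r s) : dom (r ++ [a]) s := by
  obtain ⟨hl, he⟩ := h
  refine ⟨by simp; omega, fun j hj => ?_⟩
  rw [getD_append_lt _ _ _ (by omega)]
  exact he j hj

/-- The key bumping interaction: the modified first row dominates the modified second row. -/
lemma dom_hstep {r r₂ : List ℕ} {idx a : ℕ}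
    (hidx : idx < r.length) (ha : a < r.getD idx 0)
    (hbef : ∀ q, q < idx → r.getD q 0 ≤ a)
    (hdom : dom r r₂) :
    dom (r.set idx a) (hstep r₂ (r.getD idx 0)) := by
  obtain ⟨hdl, hde⟩ := hdom
  rcases hf : r₂.findIdx? (fun x => decide (r.getD idx 0 < x)) with _ | p
  · -- append case in the second row
    rw [hstep_none hf]
    rw [findIdx?_none_iff] at hf
    have hlen2 : r₂.length ≤ idx := by
      by_contra hc
      have h1 := hde idx (by omega)
      exact absurd h1 (not_lt.mpr (hf _ (getD_mem r₂ idx (by omega))))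
    refine ⟨by simp [List.length_set]; omega, fun j hj => ?_⟩
    simp only [List.length_append, List.length_cons, List.length_nil] at hj
    rw [getD_set]
    by_cases h1 : j < r₂.length
    · rw [getD_append_lt _ _ _ h1, if_neg (by omega)]
      exact hde j h1
    · have hj2 : j = r₂.length := by omega
      subst hj2
      rw [List.getD_append_right _ _ _ _ (by omega)]
      simp only [Nat.sub_self, List.getD_cons_zero]
      by_cases h2 : idx = r₂.length
      · rw [if_pos ⟨h2, by omega⟩]
        exact ha
      · rw [if_neg (by tauto)]
        exact lt_of_le_of_lt (hbef _ (by omega)) ha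
  · -- set case in the second row
    rw [hstep_some hf]
    obtain ⟨hp, hzp, hpbef⟩ := findIdx?_spec hf
    have hple : p ≤ idx := by
      by_contra hc
      have h1 := hde idx (by omega)
      exact absurd h1 (not_lt.mpr (hpbef idx (by omega)))
    refine ⟨by simpa using hdl, fun j hj => ?_⟩
    simp only [List.length_set] at hj
    rw [getD_set, getD_set]
    by_cases h2 : idx = j
    · rw [if_pos ⟨h2, by omega⟩]
      by_cases h1 : p = j
      · rw [if_pos ⟨h1, hj⟩]
        exact ha
      · rw [if_neg (by tauto)]
        exact lt_trans (h2 ▸ ha) (hde j hj)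
    · rw [if_neg (by tauto)]
      by_cases h1 : p = j
      · rw [if_pos ⟨h1, hj⟩]
        exact lt_of_le_of_lt (hbef j (by omega)) ha
      · rw [if_neg (by tauto)]
        exact hde j hj

/-- Schensted bumping lemma: row insertion preserves the tableau property. -/
theorem tab_insert : ∀ (T : List (List ℕ)) (a : ℕ), Tab T → Tab (rowInsertOne T a) := by
  intro T
  induction T with
  | nil => intro a _; rw [rowInsertOne_nil]; exact tab_singleton a
  | cons r rest ih =>
    intro a hT
    have hsr : SortedR r := hT.1 r (by simp)
    rcases hf : r.findIdx? (fun x => decide (a < x)) with _ | idx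
    · rw [rowInsertOne_cons_none rest hf]
      have hall := findIdx?_none_iff.mp hf
      constructor
      · intro s hs
        rcases List.mem_cons.mp hs with h1 | h1
        · subst h1; exact sortedR_append hsr hall
        · exact hT.1 s (by simp [h1])
      · rw [List.isChain_cons]
        exact ⟨fun y hy => dom_append_right (tab_dom_head hT y hy),
          (List.isChain_cons.mp hT.2).2⟩
    · rw [rowInsertOne_cons_some rest hf]
      obtain ⟨hidx, ha, hbef⟩ := findIdx?_spec hf
      have htr : Tab (rowInsertOne rest (r.getD idx 0)) := ih _ (tab_tail hT)
      have hdomr : dom r (rest.headD []) := by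
        cases rest with
        | nil => exact ⟨by simp, by simp⟩
        | cons s rest' => exact tab_dom_head hT s rfl
      constructor
      · intro s hs
        rcases List.mem_cons.mp hs with h1 | h1
        · subst h1; exact sortedR_set hsr hidx ha hbef
        · exact htr.1 s h1
      · rw [List.isChain_cons]
        refine ⟨?_, htr.2⟩
        intro y hy
        have hy' : y = hstep (rest.headD []) (r.getD idx 0) := by
          have h1 : (rowInsertOne rest (r.getD idx 0)).head? = some y := Option.mem_def.mp hy
          rw [head?_rowInsertOne] at h1
          exact (Option.some.inj h1).symm
        rw [hy']
        exact dom_hstep hidx ha hbef hdomr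

lemma tab_fold (w : List ℕ) : ∀ (T : List (List ℕ)), Tab T → Tab (List.foldl rowInsertOne T w) := by
  induction w with
  | nil => intro T h; exact h
  | cons a w ih => intro T h; exact ih _ (tab_insert T a h)

end BBSAux
namespace BBSAux
open BBS

/-! ### Bound on the length of the first row -/

lemma hstep_inv (L : ℕ) (f : ℕ → ℕ) (hf : ∀ j j', j ≤ j' → j' < L → f j ≤ f j')
    (t : ℕ) (ht : t < L) (r : List ℕ)
    (h1 : r.length ≤ L + 1)
    (hM : ∀ p, t ≤ p → p < L → p + 1 < r.length → f p < r.getD (p+1) 0)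
    (hN : ∀ p, p < t → p + 1 < r.length → f p ≤ r.getD (p+1) 0) :
    (hstep r (f t)).length ≤ L + 1 ∧
    (∀ p, t + 1 ≤ p → p < L → p + 1 < (hstep r (f t)).length →
      f p < (hstep r (f t)).getD (p+1) 0) ∧
    (∀ p, p < t + 1 → p + 1 < (hstep r (f t)).length →
      f p ≤ (hstep r (f t)).getD (p+1) 0) := by
  rcases hfi : r.findIdx? (fun x => decide (f t < x)) with _ | idx
  · rw [hstep_none hfi]
    rw [findIdx?_none_iff] at hfi
    have hlen : r.length ≤ t + 1 := by
      by_contra hc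
      have h2 := hM t (le_refl t) ht (by omega)
      exact absurd h2 (not_lt.mpr (hfi _ (getD_mem r (t+1) (by omega))))
    refine ⟨by simp; omega, ?_, ?_⟩
    · intro p hp hpL hplen
      simp only [List.length_append, List.length_cons, List.length_nil] at hplen
      omega
    · intro p hp hplen
      simp only [List.length_append, List.length_cons, List.length_nil] at hplen
      by_cases h2 : p + 1 < r.length
      · rw [getD_append_lt _ _ _ h2]
        exact hN p (by omega) h2
      · have h3 : p + 1 = r.length := by omega
        rw [List.getD_append_right _ _ _ _ (by omega)]
        simp only [h3, Nat.sub_self, List.getD_cons_zero]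
        exact hf p t (by omega) ht
  · rw [hstep_some hfi]
    obtain ⟨hidx, hval, hbef⟩ := findIdx?_spec hfi
    have hix : idx ≤ t + 1 := by
      by_contra hc
      have h2 := hM t (le_refl t) ht (by omega)
      exact absurd h2 (not_lt.mpr (hbef (t+1) (by omega)))
    simp only [List.length_set]
    refine ⟨h1, ?_, ?_⟩
    · intro p hp hpL hplen
      rw [getD_set, if_neg (by omega)]
      exact hM p (by omega) hpL hplen
    · intro p hp hplen
      rw [getD_set]
      by_cases h2 : idx = p + 1
      · rw [if_pos ⟨h2, by omega⟩]
        exact hf p t (by omega) ht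
      · rw [if_neg (by tauto)]
        by_cases h3 : p < t
        · exact hN p h3 hplen
        · have h4 : p = t := by omega
          subst h4
          exact le_of_lt (hM p (le_refl p) ht hplen)

lemma drop_map_range (L t : ℕ) (f : ℕ → ℕ) (ht : t < L) :
    ((List.range L).map f).drop t = f t :: ((List.range L).map f).drop (t+1) := by
  rw [List.drop_eq_getElem_cons (by simpa using ht)]
  congr 1
  rw [List.getElem_map, List.getElem_range]

lemma rowFold_inv (L : ℕ) (f : ℕ → ℕ) (hf : ∀ j j', j ≤ j' → j' < L → f j ≤ f j') :
    ∀ (c t : ℕ), t + c = L → ∀ r : List ℕ, r.length ≤ L + 1 →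
    (∀ p, t ≤ p → p < L → p + 1 < r.length → f p < r.getD (p+1) 0) →
    (∀ p, p < t → p + 1 < r.length → f p ≤ r.getD (p+1) 0) →
    (List.foldl hstep r (((List.range L).map f).drop t)).length ≤ L + 1 ∧
    (∀ p, p < L → p + 1 < (List.foldl hstep r (((List.range L).map f).drop t)).length →
      f p ≤ (List.foldl hstep r (((List.range L).map f).drop t)).getD (p+1) 0) := by
  intro c
  induction c with
  | zero =>
    intro t htL r h1 _ hN
    have : ((List.range L).map f).drop t = [] := by
      apply List.drop_eq_nil_of_le; simp; omega
    rw [this]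
    exact ⟨h1, fun p hp hlen => hN p (by omega) hlen⟩
  | succ c ih =>
    intro t htL r h1 hM hN
    have ht : t < L := by omega
    rw [drop_map_range L t f ht, List.foldl_cons]
    obtain ⟨g1, g2, g3⟩ := hstep_inv L f hf t ht r h1 hM hN
    exact ih (t+1) (by omega) _ g1 g2 g3

/-- After inserting the row word of the first `m` rows (bottom up), the first row stays short. -/
lemma headBound (L K : ℕ) (E : ℕ → ℕ → ℕ)
    (hm : ∀ i, i < K → ∀ j j', j ≤ j' → j' < L → E i j ≤ E i j')
    (hc : ∀ i, i + 1 < K → ∀ j, j < L → E i j < E (i+1) j) :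
    ∀ m, m ≤ K → ∀ r : List ℕ, r.length ≤ L + 1 →
    (∀ p, p < L → p + 1 < r.length → 0 < m → E (m-1) p < r.getD (p+1) 0) →
    (List.foldl hstep r
      (((List.range m).reverse).flatMap (fun i => (List.range L).map (E i)))).length ≤ L + 1 := by
  intro m
  induction m with
  | zero => intro _ r h1 _; simpa using h1
  | succ m ih =>
    intro hmK r h1 hprev
    have hrev : (List.range (m+1)).reverse = m :: (List.range m).reverse := by
      rw [List.range_succ, List.reverse_append]; rfl
    rw [hrev, List.flatMap_cons, List.foldl_append]
    have h0 : ((List.range L).map (E m)).drop 0 = (List.range L).map (E m) := rfl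
    obtain ⟨g1, g2⟩ := rowFold_inv L (E m) (hm m (by omega)) L 0 (by omega) r h1
      (fun p _ hpL hplen => hprev p hpL hplen (by omega)) (by omega)
    rw [h0] at g1 g2
    refine ih (by omega) _ g1 ?_
    intro p hpL hplen hm0
    exact lt_of_lt_of_le (hc (m-1) (by omega) p hpL) (by
      have : m - 1 + 1 = m := by omega
      rw [this]
      exact g2 p hpL hplen)

/-! ### The east-count bound -/

lemma eastCount_le_of (T : List (List ℕ)) (L K : ℕ)
    (hmax : ∀ r ∈ T, r.length ≤ L + 1)
    (hsum : (T.map List.length).sum = K * (L + 1)) :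
    eastCount T L ≤ K := by
  have key : ∀ T' : List (List ℕ), (∀ r ∈ T', r.length ≤ L + 1) →
      ((T'.map fun r => r.length - L).sum) * (L + 1) ≤ (T'.map List.length).sum := by
    intro T'
    induction T' with
    | nil => intro _; simp
    | cons r rest ih =>
      intro h
      simp only [List.map_cons, List.sum_cons, add_mul]
      have h1 : (r.length - L) * (L + 1) ≤ r.length := by
        have h0 := h r (by simp)
        rcases le_or_gt r.length L with h2 | h2
        · simp [Nat.sub_eq_zero_of_le h2]
        · have h3 : r.length - L = 1 := by omega
          rw [h3]; omega
      have h4 := ih (fun s hs => h s (by simp [hs]))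
      omega
  have h5 := key T hmax
  rw [hsum] at h5
  exact Nat.le_of_mul_le_mul_right h5 (by omega)

end BBSAux
namespace BBSAux
open BBS

/-! ### Explicit computation for the vacuum input column -/

lemma findIdx?_eq_some_exact {r : List ℕ} {a j : ℕ} (hj : j < r.length)
    (hp : a < r.getD j 0) (hbef : ∀ q, q < j → r.getD q 0 ≤ a) :
    r.findIdx? (fun x => decide (a < x)) = some j := by
  rw [List.findIdx?_eq_some_iff_getElem]
  refine ⟨hj, by rw [List.getD_eq_getElem _ _ hj] at hp; simpa using hp, ?_⟩
  intro q hq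
  have := hbef q hq
  rw [List.getD_eq_getElem _ _ (by omega)] at this
  simpa using this

lemma noBump : ∀ (w r : List ℕ), List.IsChain (· ≤ ·) (r ++ w) →
    List.foldl hstep r w = r ++ w ∧ bumpSeq r w = [] := by
  intro w
  induction w with
  | nil => intro r _; simp [bumpSeq_nil]
  | cons a w ih =>
    intro r h
    have hall : ∀ x ∈ r, x ≤ a := by
      have hp := List.isChain_iff_pairwise.mp h
      rw [List.pairwise_append] at hp
      exact fun x hx => hp.2.2 x hx a (by simp)
    have hf : r.findIdx? (fun x => decide (a < x)) = none := findIdx?_none_iff.mpr hall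
    rw [List.foldl_cons, hstep_none hf, bumpSeq_cons_none _ hf]
    have h2 : List.IsChain (· ≤ ·) ((r ++ [a]) ++ w) := by
      rw [List.append_assoc]; exact h
    obtain ⟨e1, e2⟩ := ih (r ++ [a]) h2
    refine ⟨?_, e2⟩
    rw [e1, List.append_assoc]; rfl

lemma take_map_range_succ {α : Type} (L t : ℕ) (f : ℕ → α) (h : t < L) :
    ((List.range L).map f).take (t+1) = ((List.range L).map f).take t ++ [f t] := by
  rw [List.take_succ, List.getElem?_eq_getElem (by simpa using h)]
  simp

lemma getD_take_map_range (L t q : ℕ) (f : ℕ → ℕ) (h : q < t) (hL : t ≤ L) :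
    ((((List.range L).map f).take t).getD q 0) = f q := by
  rw [List.getD_eq_getElem _ _ (by simp; omega), List.getElem_take, List.getElem_map,
    List.getElem_range]

/-- One full row of `f`-letters passes through a first row of the form
`x :: (f-prefix ++ g-suffix)`, restoring the `f`-row and bumping out the `g`-row. -/
lemma rowPhase (L x : ℕ) (f g : ℕ → ℕ)
    (hx : ∀ j, j < L → x ≤ f j)
    (hmono : ∀ j j', j ≤ j' → j' < L → f j ≤ f j')
    (hfg : ∀ j, j < L → f j < g j) :
    ∀ c t, t + c = L →
    (List.foldl hstep
        (x :: (((List.range L).map f).take t ++ ((List.range L).map g).drop t))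
        (((List.range L).map f).drop t)
      = x :: (List.range L).map f)
    ∧ bumpSeq (x :: (((List.range L).map f).take t ++ ((List.range L).map g).drop t))
        (((List.range L).map f).drop t) = ((List.range L).map g).drop t := by
  intro c
  induction c with
  | zero =>
    intro t ht
    have ht' : t = L := by omega
    rw [ht']
    have e1 : ((List.range L).map f).drop L = [] := List.drop_eq_nil_of_le (by simp)
    have e2 : ((List.range L).map g).drop L = [] := List.drop_eq_nil_of_le (by simp)
    have e3 : ((List.range L).map f).take L = (List.range L).map f :=
      List.take_of_length_le (by simp)
    rw [e1, e2, e3]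
    simp [bumpSeq_nil]
  | succ c ih =>
    intro t ht
    have htL : t < L := by omega
    set R : List ℕ :=
      x :: (((List.range L).map f).take t ++ ((List.range L).map g).drop t) with hR
    have hdropg : ((List.range L).map g).drop t = g t :: ((List.range L).map g).drop (t+1) :=
      drop_map_range L t g htL
    have hlen : R.length = L + 1 := by
      rw [hR]; simp; try omega
    have hgetTop : R.getD (t+1) 0 = g t := by
      rw [hR, List.getD_cons_succ,
        List.getD_append_right _ _ _ _ (by simp; try omega)]
      have : t - (((List.range L).map f).take t).length = 0 := by simp; try omega
      rw [this, hdropg, List.getD_cons_zero]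
    have hbef : ∀ q, q < t + 1 → R.getD q 0 ≤ f t := by
      intro q hq
      cases q with
      | zero => rw [hR, List.getD_cons_zero]; exact hx t htL
      | succ q' =>
        rw [hR, List.getD_cons_succ, getD_append_lt _ _ _ (by simp; omega),
          getD_take_map_range L t q' f (by omega) (by omega)]
        exact hmono q' t (by omega) htL
    have hfind : R.findIdx? (fun y => decide (f t < y)) = some (t+1) :=
      findIdx?_eq_some_exact (by omega) (by rw [hgetTop]; exact hfg t htL) hbef
    have hset : R.set (t+1) (f t)
        = x :: (((List.range L).map f).take (t+1) ++ ((List.range L).map g).drop (t+1)) := by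
      rw [hR, List.set_cons_succ,
        List.set_append_right _ _ (by simp; try omega)]
      have e4 : t - (((List.range L).map f).take t).length = 0 := by simp; try omega
      rw [e4, hdropg, List.set_cons_zero, take_map_range_succ L t f htL, List.append_assoc]
      rfl
    have hdropf : ((List.range L).map f).drop t = f t :: ((List.range L).map f).drop (t+1) :=
      drop_map_range L t f htL
    rw [hdropf, List.foldl_cons, bumpSeq_cons_some _ hfind, hstep_some hfind, hgetTop, hset]
    obtain ⟨e5, e6⟩ := ih (t+1) (by omega)
    rw [e5, e6, hdropg]
    exact ⟨rfl, rfl⟩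

/-- Passing rows `m-1, …, 0` through a first row currently equal to `x :: row m`. -/
lemma chainFold (L M x : ℕ) (E : ℕ → ℕ → ℕ)
    (hx : ∀ i, i ≤ M → ∀ j, j < L → x ≤ E i j)
    (hm : ∀ i, i ≤ M → ∀ j j', j ≤ j' → j' < L → E i j ≤ E i j')
    (hc : ∀ i, i + 1 ≤ M → ∀ j, j < L → E i j < E (i+1) j) :
    ∀ m, m ≤ M →
    (List.foldl hstep (x :: (List.range L).map (E m))
        (((List.range m).reverse).flatMap (fun i => (List.range L).map (E i)))
      = x :: (List.range L).map (E 0))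
    ∧ bumpSeq (x :: (List.range L).map (E m))
        (((List.range m).reverse).flatMap (fun i => (List.range L).map (E i)))
      = ((List.range m).reverse).flatMap (fun i => (List.range L).map (E (i+1))) := by
  intro m
  induction m with
  | zero => intro _; simp [bumpSeq_nil]
  | succ m ih =>
    intro hmM
    have hrev : (List.range (m+1)).reverse = m :: (List.range m).reverse := by
      rw [List.range_succ, List.reverse_append]; rfl
    rw [hrev, List.flatMap_cons, List.foldl_append, bumpSeq_append]
    have hstart : x :: (List.range L).map (E (m+1))
        = x :: (((List.range L).map (E m)).take 0 ++ ((List.range L).map (E (m+1))).drop 0) := by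
      simp
    obtain ⟨p1, p2⟩ := rowPhase L x (E m) (E (m+1)) (fun j hj => hx m (by omega) j hj)
      (hm m (by omega)) (hc m (by omega)) L 0 (by omega)
    simp only [List.take_zero, List.nil_append, List.drop_zero] at p1 p2
    rw [p1, p2]
    obtain ⟨q1, q2⟩ := ih (by omega)
    rw [q1, q2]
    exact ⟨rfl, rfl⟩

lemma map_range_succ_head {α : Type} (K : ℕ) (g : ℕ → α) :
    (List.range (K+1)).map g = g 0 :: (List.range K).map (fun i => g (i+1)) := by
  rw [List.range_succ_eq_map, List.map_cons, List.map_map]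
  rfl

/-- Full explicit insertion of a tableau word into the vacuum column. -/
lemma vacInsert (L : ℕ) (hL : 1 ≤ L) : ∀ (K o : ℕ) (E : ℕ → ℕ → ℕ),
    (∀ i, i < K → ∀ j j', j ≤ j' → j' < L → E i j ≤ E i j') →
    (∀ i, i + 1 < K → ∀ j, j < L → E i j < E (i+1) j) →
    (∀ i, i < K → ∀ j, j < L → o + i + 1 ≤ E i j) →
    List.foldl rowInsertOne ((List.range K).map (fun i => [o + i + 1]))
      (((List.range K).reverse).flatMap (fun i => (List.range L).map (E i)))
      = (List.range K).map (fun i => (o + i + 1) :: (List.range L).map (E i)) := by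
  intro K
  induction K with
  | zero => intro o E _ _ _; simp
  | succ K ih =>
    intro o E hm hc hp
    have hT0 : (List.range (K+1)).map (fun i => [o + i + 1])
        = [o + 1] :: (List.range K).map (fun i => [(o+1) + i + 1]) := by
      rw [map_range_succ_head]
      congr 1
      exact List.map_congr_left fun i _ => by rw [show o + (i+1) + 1 = (o+1) + i + 1 by omega]
    have hrev : (List.range (K+1)).reverse = K :: (List.range K).reverse := by
      rw [List.range_succ, List.reverse_append]; rfl
    rw [hT0, hrev, List.flatMap_cons, foldl_insert_cons]
    -- head evolution
    have hchain : List.IsChain (· ≤ ·) ([o+1] ++ (List.range L).map (E K)) := by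
      rw [List.isChain_iff_getElem]
      intro i hi
      simp only [List.length_append, List.length_cons, List.length_nil, List.length_map,
        List.length_range] at hi
      cases i with
      | zero =>
        simp only [List.get_eq_getElem, List.getElem_append, List.singleton_append]
        have h1 : (((o+1) :: (List.range L).map (E K)) : List ℕ)[0] = o + 1 := rfl
        have h2 : (((o+1) :: (List.range L).map (E K)) : List ℕ)[1]'(by simp; omega)
            = E K 0 := by
          simp [List.getElem_map, List.getElem_range]
        rw [List.singleton_append] at *
        rw [h1, h2]
        have := hp K (by omega) 0 (by omega)
        omega
      | succ i =>
        simp only [List.get_eq_getElem, List.singleton_append, List.getElem_cons_succ]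
        rw [List.getElem_map, List.getElem_map, List.getElem_range, List.getElem_range]
        exact hm K (by omega) i (i+1) (by omega) (by omega)
    obtain ⟨n1, n2⟩ := noBump ((List.range L).map (E K)) [o+1] hchain
    rw [List.foldl_append, bumpSeq_append, n1, n2, List.singleton_append, List.nil_append]
    obtain ⟨c1, c2⟩ := chainFold L K (o+1) E
      (fun i hi j hj => by have := hp i (by omega) j hj; omega)
      (fun i hi => hm i (by omega))
      (fun i hi => hc i (by omega))
      K (le_refl K)
    rw [c1, c2]
    have hrest : List.foldl rowInsertOne ((List.range K).map (fun i => [(o+1) + i + 1]))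
        (((List.range K).reverse).flatMap (fun i => (List.range L).map (E (i+1))))
        = (List.range K).map (fun i => ((o+1) + i + 1) :: (List.range L).map (E (i+1))) := by
      exact ih (o+1) (fun i j => E (i+1) j)
        (fun i hi => hm (i+1) (by omega))
        (fun i hi => hc (i+1) (by omega))
        (fun i hi j hj => by
          show (o+1) + i + 1 ≤ E (i+1) j
          have := hp (i+1) (by omega) j hj
          omega)
    rw [hrest, map_range_succ_head K (fun i => (o + i + 1) :: (List.range L).map (E i))]
    congr 1
    exact List.map_congr_left fun i _ => by
      rw [show (o+1) + i + 1 = o + (i+1) + 1 by omega]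

end BBSAux
namespace BBSAux
open BBS

/-! ### Bridge from `RectTableau` to the abstract lemmas -/

lemma entry_ge {n k l : ℕ} (x : RectTableau n k l) :
    ∀ (m : ℕ) (i : Fin k) (j : Fin l), i.1 = m → m + 1 ≤ x.entry i j := by
  intro m
  induction m with
  | zero => intro i j _; exact x.entry_pos i j
  | succ m ih =>
    intro i j hi
    have hm : m < k := by omega
    have h1 := ih ⟨m, hm⟩ j rfl
    have h2 : (⟨m, hm⟩ : Fin k) < i := by
      rw [Fin.lt_def]
      show m < i.1
      omega
    have h3 := x.col_strict j h2
    simp only at h3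
    omega

/-- The entry function of a tableau as a total function `ℕ → ℕ → ℕ`. -/
noncomputable def entE {n k l : ℕ} (c : RectTableau n k l) (hk : 0 < k) (hl : 0 < l) :
    ℕ → ℕ → ℕ :=
  fun i j => c.entry ⟨min i (k-1), by omega⟩ ⟨min j (l-1), by omega⟩

lemma entE_eq {n k l : ℕ} (c : RectTableau n k l) (hk : 0 < k) (hl : 0 < l)
    {i j : ℕ} (hi : i < k) (hj : j < l) :
    entE c hk hl i j = c.entry ⟨i, hi⟩ ⟨j, hj⟩ := by
  unfold entE
  congr 1 <;> apply Fin.ext <;> simp <;> omega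

lemma entE_mono {n k l : ℕ} (c : RectTableau n k l) (hk : 0 < k) (hl : 0 < l) :
    ∀ i, i < k → ∀ j j', j ≤ j' → j' < l → entE c hk hl i j ≤ entE c hk hl i j' := by
  intro i hi j j' hjj hj'
  rw [entE_eq c hk hl hi (by omega), entE_eq c hk hl hi hj']
  exact c.row_mono ⟨i, hi⟩ (show (⟨j, by omega⟩ : Fin l) ≤ ⟨j', hj'⟩ from hjj)

lemma entE_strict {n k l : ℕ} (c : RectTableau n k l) (hk : 0 < k) (hl : 0 < l) :
    ∀ i, i + 1 < k → ∀ j, j < l → entE c hk hl i j < entE c hk hl (i+1) j := by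
  intro i hi j hj
  rw [entE_eq c hk hl (by omega) hj, entE_eq c hk hl hi hj]
  exact c.col_strict ⟨j, hj⟩ (show (⟨i, by omega⟩ : Fin k) < ⟨i+1, hi⟩ from Nat.lt_succ_self i)

lemma entE_pos {n k l : ℕ} (c : RectTableau n k l) (hk : 0 < k) (hl : 0 < l) :
    ∀ i, i < k → ∀ j, j < l → 0 + i + 1 ≤ entE c hk hl i j := by
  intro i hi j hj
  rw [entE_eq c hk hl hi hj]
  have := entry_ge c i ⟨i, hi⟩ ⟨j, hj⟩ rfl
  omega

/-- The row word in `List.range` form. -/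
lemma rowWord_eq {n k l : ℕ} (c : RectTableau n k l) (hk : 0 < k) (hl : 0 < l) :
    rowWord c
      = ((List.range k).reverse).flatMap (fun i => (List.range l).map (entE c hk hl i)) := by
  unfold rowWord
  have h1 : (fun (i : Fin k) => (List.finRange l).map fun j => c.entry i j)
      = fun (i : Fin k) => (List.range l).map (entE c hk hl i.1) := by
    funext i
    rw [← List.map_coe_finRange_eq_range (n := l), List.map_map]
    apply List.map_congr_left
    intro j _
    show c.entry i j = entE c hk hl i.1 j.1
    rw [entE_eq c hk hl i.isLt j.isLt]
  rw [h1, ← List.map_coe_finRange_eq_range (n := k), ← List.map_reverse, List.flatMap_map]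

/-- The rows of a one-column tableau in `List.range` form. -/
lemma toRows_col_eq {n k : ℕ} (b : RectTableau n k 1) (hk : 0 < k) :
    toRows b = (List.range k).map (fun i => [entE b hk Nat.one_pos i 0]) := by
  unfold toRows
  have h1 : (fun (i : Fin k) => (List.finRange 1).map fun j => b.entry i j)
      = fun (i : Fin k) => [entE b hk Nat.one_pos i.1 0] := by
    funext i
    have : List.finRange 1 = [(0 : Fin 1)] := rfl
    rw [this, List.map_cons, List.map_nil]
    congr 1
    rw [entE_eq b hk Nat.one_pos i.isLt Nat.one_pos]
    congr 1 <;> apply Fin.ext <;> simp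
  rw [h1, ← List.map_coe_finRange_eq_range (n := k), List.map_map]
  rfl

lemma tab_toRows_col {n k : ℕ} (b : RectTableau n k 1) (hk : 0 < k) :
    Tab (toRows b) := by
  rw [toRows_col_eq b hk]
  constructor
  · intro r hr
    rw [List.mem_map] at hr
    obtain ⟨i, _, hi⟩ := hr
    subst hi
    intro p hp
    simp at hp
  · rw [List.isChain_map]
    cases k with
    | zero => simp
    | succ K =>
      rw [List.isChain_range_succ]
      intro m hm
      refine ⟨le_refl _, fun j hj => ?_⟩
      simp only [List.length_cons, List.length_nil] at hj
      have hj0 : j = 0 := by omega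
      subst hj0
      simp only [List.getD_cons_zero]
      exact entE_strict b hk Nat.one_pos m (by omega) 0 Nat.one_pos

lemma headD_map_range {α : Type} (K : ℕ) (hK : 0 < K) (g : ℕ → α) (d : α) :
    ((List.range K).map g).headD d = g 0 := by
  cases K with
  | zero => omega
  | succ K => rw [List.range_succ_eq_map, List.map_cons]; rfl

/-! ### The two energy computations -/

lemma sum_len_toRows_col {n k : ℕ} (b : RectTableau n k 1) (hk : 0 < k) :
    ((toRows b).map List.length).sum = k := by
  rw [toRows_col_eq b hk, List.map_map]
  have : (List.length ∘ fun i => [entE b hk Nat.one_pos i 0]) = fun _ => 1 := by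
    funext i; rfl
  rw [this, List.map_const', List.sum_replicate]
  simp

lemma len_rowWord {n k l : ℕ} (c : RectTableau n k l) (hk : 0 < k) (hl : 0 < l) :
    (rowWord c).length = k * l := by
  rw [rowWord_eq c hk hl, List.length_flatMap]
  have : (fun i => ((List.range l).map (entE c hk hl i)).length) = fun _ => l := by
    funext i; simp
  rw [this, List.map_const', List.sum_replicate]
  simp [mul_comm]

lemma eastCount_insert_le {n k l : ℕ} (hk : 1 ≤ k) (hl : 1 ≤ l)
    (c : RectTableau n k l) (b : RectTableau n k 1) :
    eastCount (rowInsertWord (toRows b) (rowWord c)) l ≤ k := by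
  have hfold : rowInsertWord (toRows b) (rowWord c)
      = List.foldl rowInsertOne (toRows b) (rowWord c) := rfl
  have hTab : Tab (rowInsertWord (toRows b) (rowWord c)) := by
    rw [hfold]; exact tab_fold _ _ (tab_toRows_col b hk)
  have hsum : ((rowInsertWord (toRows b) (rowWord c)).map List.length).sum = k * (l + 1) := by
    rw [hfold, sumLen_fold, sum_len_toRows_col b hk, len_rowWord c hk hl]
    ring
  have hhead : ((rowInsertWord (toRows b) (rowWord c)).headD []).length ≤ l + 1 := by
    rw [hfold, headD_fold, toRows_col_eq b hk, headD_map_range k hk _ [],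
      rowWord_eq c hk hl]
    apply headBound l k (entE c hk hl) (entE_mono c hk hl) (entE_strict c hk hl) k (le_refl k)
    · simp
    · intro p hp hlen hm0
      simp at hlen
  have hrows : ∀ r ∈ rowInsertWord (toRows b) (rowWord c), r.length ≤ l + 1 :=
    fun r hr => le_trans (tab_len_le_head hTab r hr) hhead
  exact eastCount_le_of _ l k hrows hsum

/-- The energy of any `B^{k,l} ⊗ B^{k,1}` pair is nonpositive. -/
lemma energyH_le_zero {n k l : ℕ} (hk : 1 ≤ k) (hl : 1 ≤ l)
    (c : RectTableau n k l) (b : RectTableau n k 1) :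
    energyH c b ≤ 0 := by
  unfold energyH
  rw [Nat.max_eq_left hl, min_self]
  simp only [Nat.cast_one]
  rw [min_eq_right (show (1:ℤ) ≤ (l:ℤ) by exact_mod_cast hl), mul_one]
  have h : (eastCount (rowInsertWord (toRows b) (rowWord c)) l : ℤ) ≤ (k : ℤ) := by
    exact_mod_cast eastCount_insert_le hk hl c b
  omega

/-- The vacuum column passes through any carrier with zero energy. -/
lemma energyH_vac {n k l : ℕ} (hk : 1 ≤ k) (hl : 1 ≤ l) (hkn : k ≤ n)
    (c : RectTableau n k l) :
    energyH c (constTab n k 1 hkn) = 0 := by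
  have hrows : toRows (constTab n k 1 hkn) = (List.range k).map (fun i => [0 + i + 1]) := by
    rw [toRows_col_eq _ hk]
    apply List.map_congr_left
    intro i hi
    rw [List.mem_range] at hi
    rw [entE_eq _ hk Nat.one_pos hi Nat.one_pos]
    show ([(constTab n k 1 hkn).entry ⟨i, hi⟩ ⟨0, Nat.one_pos⟩] : List ℕ) = [0 + i + 1]
    unfold constTab
    simp
  have hins : rowInsertWord (toRows (constTab n k 1 hkn)) (rowWord c)
      = (List.range k).map (fun i => (0 + i + 1) :: (List.range l).map (entE c hk hl i)) := by
    show List.foldl rowInsertOne (toRows (constTab n k 1 hkn)) (rowWord c) = _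
    rw [hrows, rowWord_eq c hk hl]
    exact vacInsert l hl k 0 (entE c hk hl) (entE_mono c hk hl) (entE_strict c hk hl)
      (entE_pos c hk hl)
  unfold energyH
  rw [Nat.max_eq_left hl, min_self]
  simp only [Nat.cast_one]
  rw [min_eq_right (show (1:ℤ) ≤ (l:ℤ) by exact_mod_cast hl), mul_one, hins]
  have he : eastCount ((List.range k).map
      (fun i => (0 + i + 1) :: (List.range l).map (entE c hk hl i))) l = k := by
    unfold eastCount
    rw [List.map_map]
    have : ((fun r : List ℕ => r.length - l) ∘
        fun i => (0 + i + 1) :: (List.range l).map (entE c hk hl i)) = fun _ => 1 := by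
      funext i
      show ((0 + i + 1) :: (List.range l).map (entE c hk hl i)).length - l = 1
      simp
    rw [this, List.map_const', List.sum_replicate]
    simp
  rw [he]
  simp

end BBSAux
namespace BBSAux
open BBS

lemma energySum_append {n k l : ℕ} (xs : List (RectTableau n k 1)) :
    ∀ (c : RectTableau n k l) (ys : List (RectTableau n k 1)),
    energySum c (xs ++ ys) = energySum c xs + energySum (carrierPass c xs).2 ys := by
  induction xs with
  | nil =>
    intro c ys
    show energySum c ys = energySum c [] + energySum (carrierPass c []).2 ys
    rw [show energySum c ([] : List (RectTableau n k 1)) = 0 from rfl]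
    rw [show (carrierPass c ([] : List (RectTableau n k 1))).2 = c from rfl]
    ring
  | cons b xs ih =>
    intro c ys
    show energyH c b + energySum (combR c b).2 (xs ++ ys) = _
    rw [ih]
    show _ = energyH c b + energySum (combR c b).2 xs
        + energySum (carrierPass (combR c b).2 xs).2 ys
    ring

lemma energySum_nonpos {n k l : ℕ} (hk : 1 ≤ k) (hl : 1 ≤ l) :
    ∀ (p : List (RectTableau n k 1)) (c : RectTableau n k l), energySum c p ≤ 0 := by
  intro p
  induction p with
  | nil => intro c; exact le_refl 0
  | cons b p ih =>
    intro c
    show energyH c b + energySum (combR c b).2 p ≤ 0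
    have h1 := energyH_le_zero hk hl c b
    have h2 := ih (combR c b).2
    omega

lemma energySum_replicate_vac {n k l : ℕ} (hk : 1 ≤ k) (hl : 1 ≤ l) (hkn : k ≤ n) :
    ∀ (m : ℕ) (c : RectTableau n k l),
    energySum c (List.replicate m (constTab n k 1 hkn)) = 0 := by
  intro m
  induction m with
  | zero => intro c; rfl
  | succ m ih =>
    intro c
    rw [List.replicate_succ]
    show energyH c (constTab n k 1 hkn)
        + energySum (combR c (constTab n k 1 hkn)).2 (List.replicate m (constTab n k 1 hkn)) = 0
    rw [energyH_vac hk hl hkn c, ih]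
    ring

lemma bbsE_eq {n k l : ℕ} (hk : 1 ≤ k) (hl : 1 ≤ l) (hkn : k ≤ n)
    (q : List (RectTableau n k 1)) (m : ℕ) :
    bbsE hkn l (q ++ List.replicate m (constTab n k 1 hkn))
      = - energySum (constTab n k l hkn) q := by
  unfold bbsE
  rw [energySum_append, energySum_replicate_vac hk hl hkn, add_zero]

end BBSAux
open BBS in
/-- for a state `p`, the quantity `E_l(p) = -∑_j H(b^{(j-1)} ⊗ b_j)` is a
nonnegative integer and is independent of the system size `L` (for `L` sufficiently large
compared with the support of `p`). -/
theorem energy_nonneg_indep {n k : ℕ} (hn : 2 ≤ n) (hk : 1 ≤ k) (hkn : k < n)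
    (l : ℕ) (hl : 1 ≤ l) (q : List (RectTableau n k 1)) :
    ∃ N : ℕ, ∀ m : ℕ, N ≤ m →
      bbsE hkn.le l (q ++ List.replicate m (constTab n k 1 hkn.le))
          = bbsE hkn.le l (q ++ List.replicate N (constTab n k 1 hkn.le)) ∧
      0 ≤ bbsE hkn.le l (q ++ List.replicate m (constTab n k 1 hkn.le)) := by
  refine ⟨0, fun m _ => ?_⟩
  rw [BBSAux.bbsE_eq hk hl hkn.le q m, BBSAux.bbsE_eq hk hl hkn.le q 0]
  exact ⟨rfl, neg_nonneg.mpr (BBSAux.energySum_nonpos hk hl q _)⟩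
end

section
/- The highest weight elements among two soliton states in (B^{k,1})^{⊗L} — i.e., two soliton states p with e_i p = 0 for all i ∈ I \ {0,k} — are exactly the states p̃ = [𝟎]^{⊗c_1} ⊗ [𝟏]^{⊗d_1} ⊗ [𝟎]^{⊗(c_2−c_1−d_1)} ⊗ [𝟑]^{⊗α} ⊗ [𝟐_±]^{⊗(d_2−α−β)} ⊗ [𝟏]^{⊗β} ⊗ [𝟎]^{⊗(L−c_2−d_2)} with 0 ≤ α + β ≤ d_2. -/
namespace BBS

open scoped Classical

variable {n k l k' l' d d1 d2 : ℕ}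

/-! ### Fold-state machinery for `sigUnpaired` -/

/-- State transition on (unpaired-minus count, unpaired-plus count). -/
def stepE (i : ℕ) (st : ℕ × ℕ) (a : ℕ) : ℕ × ℕ :=
  if a = i then (st.1, st.2 + 1)
  else if a = i + 1 then
    match st.2 with
    | 0 => (st.1 + 1, 0)
    | q + 1 => (st.1, q)
  else st

/-- The fold function used in `sigUnpaired`. -/
def suF (i : ℕ) : List ℕ × List ℕ → ℕ × ℕ → List ℕ × List ℕ := fun mp x =>
  if x.2 = i then (mp.1, x.1 :: mp.2)
  else if x.2 = i + 1 then
    match mp.2 with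
    | [] => (mp.1 ++ [x.1], [])
    | _ :: rest => (mp.1, rest)
  else mp

lemma sigUnpaired_eq_foldl (i : ℕ) (w : List ℕ) :
    sigUnpaired i w = (w.zipIdx.map Prod.swap).foldl (suF i) ([], []) := rfl

lemma suF_lengths (i : ℕ) : ∀ (l : List (ℕ × ℕ)) (st : List ℕ × List ℕ),
    (((l.foldl (suF i) st).1.length, (l.foldl (suF i) st).2.length))
      = (l.map Prod.snd).foldl (stepE i) (st.1.length, st.2.length) := by
  intro l
  induction l with
  | nil => intro st; rfl
  | cons a rest ih =>
    intro st
    rw [List.foldl_cons, List.map_cons, List.foldl_cons, ih]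
    congr 1
    unfold suF stepE
    by_cases h1 : a.2 = i
    · simp [h1]
    · by_cases h2 : a.2 = i + 1
      · simp only [h1, h2, if_false, if_true]
        rcases hst : st.2 with _ | ⟨y, ys⟩ <;> simp [hst]
      · simp [h1, h2]

lemma sigUnpaired_lengths (i : ℕ) (w : List ℕ) :
    ((sigUnpaired i w).1.length, (sigUnpaired i w).2.length) = w.foldl (stepE i) (0, 0) := by
  rw [sigUnpaired_eq_foldl]
  have h := suF_lengths i (w.zipIdx.map Prod.swap) ([], [])
  have e : (w.zipIdx.map Prod.swap).map Prod.snd = w := by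
    rw [List.map_map]; exact List.zipIdx_map_fst 0 w
  rw [e] at h
  simpa using h

lemma eWord_eq_none_iff (i : ℕ) (w : List ℕ) :
    eWord i w = none ↔ (w.foldl (stepE i) (0, 0)).1 = 0 := by
  have h := congrArg Prod.fst (sigUnpaired_lengths i w)
  simp only at h
  rw [← h]
  unfold eWord
  rcases hl : (sigUnpaired i w).1.getLast? with _ | p
  · have hl' := List.getLast?_eq_none_iff.mp hl
    rw [hl']
    simp
  · have hmem := List.mem_of_getLast? hl
    constructor
    · intro hx; exact absurd hx (by simp)
    · intro hx
      rw [List.length_eq_zero_iff] at hx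
      rw [hx] at hmem
      exact absurd hmem List.not_mem_nil

/-! ### Effect of a sorted word on the state -/

/-- The state change effected by a neutral / plus / minus word. -/
def applyS : Option Bool → ℕ × ℕ → ℕ × ℕ
  | none, st => st
  | some true, st => (st.1, st.2 + 1)
  | some false, st =>
    match st.2 with
    | 0 => (st.1 + 1, 0)
    | q + 1 => (st.1, q)

/-- The sign of a word for the letter pair `(i, i+1)`. -/
def wordSgn (i : ℕ) (w : List ℕ) : Option Bool :=
  if (i + 1) ∈ w ∧ i ∉ w then some false
  else if i ∈ w ∧ (i + 1) ∉ w then some true else none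

lemma wordSgn_congr {i : ℕ} {w w' : List ℕ} (h1 : i ∈ w ↔ i ∈ w') (h2 : i + 1 ∈ w ↔ i + 1 ∈ w') :
    wordSgn i w = wordSgn i w' := by
  unfold wordSgn
  simp only [eq_iff_iff.mpr h1, eq_iff_iff.mpr h2]

lemma foldl_stepE_sorted {i : ℕ} : ∀ {w : List ℕ}, w.Pairwise (· < ·) → ∀ (st : ℕ × ℕ),
    w.foldl (stepE i) st = applyS (wordSgn i w) st := by
  intro w
  induction w with
  | nil => intro _ st; simp [wordSgn, applyS]
  | cons a rest ih =>
    intro hw st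
    have hrest : rest.Pairwise (· < ·) := (List.pairwise_cons.mp hw).2
    have hlt : ∀ b ∈ rest, a < b := (List.pairwise_cons.mp hw).1
    rw [List.foldl_cons, ih hrest]
    rcases Nat.lt_trichotomy a i with h | h | h
    · have h1 : a ≠ i := by omega
      have h2 : a ≠ i + 1 := by omega
      have hstep : stepE i st a = st := by simp [stepE, h1, h2]
      have hcon : wordSgn i (a :: rest) = wordSgn i rest := by
        apply wordSgn_congr
        · rw [List.mem_cons]
          constructor
          · rintro (hh | hh)
            · omega
            · exact hh
          · exact Or.inr
        · rw [List.mem_cons]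
          constructor
          · rintro (hh | hh)
            · omega
            · exact hh
          · exact Or.inr
      rw [hstep, hcon]
    · -- a = i
      subst h
      have hni : a ∉ rest := fun hmem => absurd (hlt a hmem) (lt_irrefl a)
      have hstep : stepE a st a = (st.1, st.2 + 1) := by simp [stepE]
      rw [hstep]
      by_cases hmem : a + 1 ∈ rest
      · have w1 : wordSgn a (a :: rest) = none := by
          simp [wordSgn, hmem]
        have w2 : wordSgn a rest = some false := by
          simp [wordSgn, hmem, hni]
        rw [w1, w2]
        simp [applyS]
      · have w1 : wordSgn a (a :: rest) = some true := by
          have hx : a + 1 ∉ a :: rest := by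
            rw [List.mem_cons]
            rintro (hh | hh)
            · omega
            · exact hmem hh
          simp [wordSgn, hx]
        have w2 : wordSgn a rest = none := by
          simp [wordSgn, hmem, hni]
        rw [w1, w2]
        simp [applyS]
    · -- a > i
      have h1 : a ≠ i := by omega
      have hnir : i ∉ rest := fun hmem => by have := hlt i hmem; omega
      have hni : i ∉ a :: rest := by
        rw [List.mem_cons]
        rintro (hh | hh)
        · omega
        · exact hnir hh
      by_cases h2 : a = i + 1
      · subst h2
        have hstep : stepE i st (i + 1) = applyS (some false) st := by
          simp [stepE, h1, applyS]
        have hn1r : i + 1 ∉ rest := fun hmem => absurd (hlt _ hmem) (lt_irrefl _)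
        have w1 : wordSgn i ((i+1) :: rest) = some false := by
          simp [wordSgn, hni]
        have w2 : wordSgn i rest = none := by
          simp [wordSgn, hn1r, hnir]
        rw [hstep, w1, w2]
        simp [applyS]
      · have hn1r : i + 1 ∉ rest := fun hmem => by have := hlt _ hmem; omega
        have hn1 : i + 1 ∉ a :: rest := by
          rw [List.mem_cons]
          rintro (hh | hh)
          · omega
          · exact hn1r hh
        have hstep : stepE i st a = st := by simp [stepE, h1, h2]
        have w1 : wordSgn i (a :: rest) = none := by simp [wordSgn, hni, hn1]
        have w2 : wordSgn i rest = none := by simp [wordSgn, hnir, hn1r]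
        rw [hstep, w1, w2]

/-! ### `sigWord` of a single column -/

lemma sigWord_one (c : RectTableau n k 1) :
    sigWord c = List.ofFn (fun i => c.entry i ⟨0, Nat.one_pos⟩) := by
  unfold sigWord
  rw [List.ofFn_eq_map]
  have h1 : List.finRange 1 = [⟨0, Nat.one_pos⟩] := rfl
  rw [h1]
  simp

lemma sigWord_length (c : RectTableau n k 1) : (sigWord c).length = k := by
  rw [sigWord_one, List.length_ofFn]

lemma sigWord_getElem (c : RectTableau n k 1) (j : ℕ) (hj : j < (sigWord c).length) :
    (sigWord c)[j] = c.entry ⟨j, by rw [sigWord_length] at hj; exact hj⟩ ⟨0, Nat.one_pos⟩ := by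
  simp only [sigWord_one, List.getElem_ofFn]

lemma sigWord_sorted (c : RectTableau n k 1) : (sigWord c).Pairwise (· < ·) := by
  rw [sigWord_one]
  exact List.pairwise_ofFn.mpr (fun a b hab => c.col_strict _ hab)

lemma mem_sigWord_iff {c : RectTableau n k 1} {i : ℕ} :
    i ∈ sigWord c ↔ ∃ r : Fin k, c.entry r ⟨0, Nat.one_pos⟩ = i := by
  rw [sigWord_one, List.mem_ofFn]

/-- The sign of a column. -/
def colSgn (i : ℕ) (c : RectTableau n k 1) : Option Bool := wordSgn i (sigWord c)

lemma foldl_stepE_flatMap (i : ℕ) : ∀ (p : List (RectTableau n k 1)) (st : ℕ × ℕ),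
    (p.flatMap sigWord).foldl (stepE i) st
      = (p.map (colSgn i)).foldl (fun s o => applyS o s) st := by
  intro p
  induction p with
  | nil => intro st; rfl
  | cons c rest ih =>
    intro st
    rw [List.flatMap_cons, List.foldl_append, foldl_stepE_sorted (sigWord_sorted c),
      List.map_cons, List.foldl_cons, ih]
    rfl

/-! ### Ballot lemmas for sign sequences -/

lemma applyS_fst_le (o : Option Bool) (st : ℕ × ℕ) : st.1 ≤ (applyS o st).1 := by
  rcases o with _ | b
  · exact le_refl _
  · cases b
    · rcases st with ⟨m, q⟩
      cases q <;> simp [applyS]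
    · exact le_refl _

lemma foldl_applyS_fst_le (σ : List (Option Bool)) : ∀ (st : ℕ × ℕ),
    st.1 ≤ (σ.foldl (fun s o => applyS o s) st).1 := by
  induction σ with
  | nil => intro st; exact le_refl _
  | cons o rest ih =>
    intro st
    rw [List.foldl_cons]
    exact le_trans (applyS_fst_le o st) (ih _)

lemma foldl_applyS_nofalse : ∀ (σ : List (Option Bool)), some false ∉ σ → ∀ (st : ℕ × ℕ),
    σ.foldl (fun s o => applyS o s) st = (st.1, st.2 + σ.count (some true)) := by
  intro σ
  induction σ with
  | nil => intro _ st; simp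
  | cons o rest ih =>
    intro hσ st
    have ho : o ≠ some false := fun hh => hσ (hh ▸ List.mem_cons_self (a := o) (l := rest))
    have hrest : some false ∉ rest := fun hh => hσ (List.mem_cons_of_mem o hh)
    rw [List.foldl_cons, ih hrest]
    rcases o with _ | b
    · rw [List.count_cons]
      simp [applyS]
    · cases b
    -- false impossible
      · exact absurd rfl ho
      · rw [List.count_cons]
        simp [applyS]
        omega

lemma foldl_applyS_short : ∀ (σ : List (Option Bool)) (q : ℕ), σ.length ≤ q →
    ∃ q', σ.foldl (fun s o => applyS o s) (0, q) = (0, q') := by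
  intro σ
  induction σ with
  | nil => intro q _; exact ⟨q, rfl⟩
  | cons o rest ih =>
    intro q hq
    rw [List.length_cons] at hq
    rw [List.foldl_cons]
    rcases o with _ | b
    · exact ih q (by omega)
    · cases b
      · have hq1 : 1 ≤ q := by omega
        obtain ⟨q'', rfl⟩ : ∃ q'', q = q'' + 1 := ⟨q - 1, by omega⟩
        have : applyS (some false) ((0 : ℕ), q'' + 1) = (0, q'') := rfl
        rw [this]
        exact ih q'' (by omega)
      · have : applyS (some true) ((0 : ℕ), q) = (0, q + 1) := rfl
        rw [this]
        exact ih (q + 1) (by omega)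

/-- If all minuses are concentrated in a middle segment shorter than the number of pluses
before it, the final unpaired-minus count is `0`. -/
lemma ballot_zero (A B C : List (Option Bool)) (hA : some false ∉ A) (hC : some false ∉ C)
    (hB : B.length ≤ A.count (some true)) :
    ((A ++ B ++ C).foldl (fun s o => applyS o s) (0, 0)).1 = 0 := by
  rw [List.foldl_append, List.foldl_append, foldl_applyS_nofalse A hA]
  obtain ⟨q', hq⟩ := foldl_applyS_short B (A.count (some true)) hB
  simp only [Nat.zero_add] at hq ⊢
  rw [hq, foldl_applyS_nofalse C hC]

/-- If a minus occurs after only neutral signs, the final unpaired-minus count is positive. -/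
lemma ballot_pos (A C : List (Option Bool)) (hA : ∀ o ∈ A, o = none) :
    ((A ++ some false :: C).foldl (fun s o => applyS o s) (0, 0)).1 ≠ 0 := by
  have hAf : some false ∉ A := fun hh => by simpa using hA _ hh
  have hAt : some true ∉ A := fun hh => by simpa using hA _ hh
  rw [List.foldl_append, foldl_applyS_nofalse A hAf, List.foldl_cons]
  rw [List.count_eq_zero.mpr hAt]
  have h1 : applyS (some false) ((0 : ℕ), 0 + 0) = (1, 0) := rfl
  rw [h1]
  have := foldl_applyS_fst_le C (1, 0)
  omega

/-! ### Soliton columns -/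

/-- Abbreviation for the unique element of `Fin 1`. -/
def z1 : Fin 1 := ⟨0, Nat.one_pos⟩

/-- Total ℕ-indexed entry function of a column. -/
def ent (c : RectTableau n k 1) (j : ℕ) : ℕ :=
  if hj : j < k then c.entry ⟨j, hj⟩ z1 else 0

lemma ent_eq (c : RectTableau n k 1) (j : ℕ) (hj : j < k) :
    ent c j = c.entry ⟨j, hj⟩ z1 := dif_pos hj

lemma ent_eq' (c : RectTableau n k 1) (r : Fin k) (t : Fin 1) :
    c.entry r t = ent c r.1 := by
  have ht : t = z1 := Subsingleton.elim _ _
  subst ht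
  rw [ent_eq c r.1 r.isLt]

lemma ent_lt (c : RectTableau n k 1) {a b : ℕ} (hab : a < b) (hb : b < k) :
    ent c a < ent c b := by
  rw [ent_eq c a (by omega), ent_eq c b hb]
  exact c.col_strict z1 (show (⟨a, by omega⟩ : Fin k) < ⟨b, hb⟩ from hab)

lemma ent_mono (c : RectTableau n k 1) {a b : ℕ} (hab : a ≤ b) (hb : b < k) :
    ent c a ≤ ent c b := by
  rcases Nat.lt_or_ge a b with h | h
  · exact le_of_lt (ent_lt c h hb)
  · have : a = b := by omega
    rw [this]

lemma ent_ge (c : RectTableau n k 1) : ∀ (j : ℕ), j < k → j + 1 ≤ ent c j := by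
  intro j
  induction j with
  | zero =>
    intro hj
    rw [ent_eq c 0 hj]
    exact c.entry_pos _ _
  | succ m ih =>
    intro hj
    have h1 := ih (by omega)
    have h2 := ent_lt c (show m < m + 1 by omega) hj
    omega

lemma ent_le (c : RectTableau n k 1) (j : ℕ) (hj : j < k) : ent c j ≤ n := by
  rw [ent_eq c j hj]; exact c.entry_le _ _

/-- A column of soliton type: bottom entry `> k`, row `k-1` entry `≤ k`. -/
def SolCol (c : RectTableau n k 1) : Prop :=
  (∀ i : Fin k, i.1 + 1 = k → k < c.entry i z1) ∧
  (∀ i : Fin k, i.1 + 2 = k → c.entry i z1 ≤ k)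

lemma solcol_bot {c : RectTableau n k 1} (hc : SolCol c) (hk : 1 ≤ k) : k < ent c (k - 1) := by
  rw [ent_eq c (k - 1) (by omega)]
  exact hc.1 _ (by show k - 1 + 1 = k; omega)

lemma solcol_row2 {c : RectTableau n k 1} (hc : SolCol c) (hk : 2 ≤ k) : ent c (k - 2) ≤ k := by
  rw [ent_eq c (k - 2) (by omega)]
  exact hc.2 _ (by show k - 2 + 2 = k; omega)

lemma solcol_entry_le {c : RectTableau n k 1} (hc : SolCol c) (hk : 2 ≤ k) :
    ∀ (j : ℕ), j < k - 1 → ent c j ≤ j + 2 := by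
  have key : ∀ (d j : ℕ), j + d = k - 2 → ent c j ≤ j + 2 := by
    intro d
    induction d with
    | zero =>
      intro j h
      have hj : j = k - 2 := by omega
      subst hj
      have := solcol_row2 hc hk
      omega
    | succ m ih =>
      intro j h
      have h1 := ih (j + 1) (by omega)
      have h2 := ent_lt c (show j < j + 1 by omega) (by omega)
      omega
  intro j hj
  exact key (k - 2 - j) j (by omega)

/-- The entries above the bottom of a soliton column form a staircase with one jump. -/
lemma solcol_char {c : RectTableau n k 1} (hc : SolCol c) (hk : 2 ≤ k) :
    ∃ t, t ≤ k - 1 ∧ ∀ (j : ℕ), j < k - 1 → ent c j = if j < t then j + 1 else j + 2 := by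
  by_cases h : ∃ j, j < k - 1 ∧ ent c j = j + 2
  · classical
    set t := Nat.find h with ht
    obtain ⟨ht1, ht2⟩ := Nat.find_spec h
    refine ⟨t, by omega, ?_⟩
    have hup : ∀ (j : ℕ), t ≤ j → j < k - 1 → ent c j = j + 2 := by
      intro j hj
      induction j, hj using Nat.le_induction with
      | base => intro _; exact ht2
      | succ m hm ihm =>
        intro hj
        have h1 := ihm (by omega)
        have h2 := ent_lt c (show m < m + 1 by omega) (by omega)
        have h3 := solcol_entry_le hc hk (m + 1) hj
        omega
    intro j hj
    by_cases hjt : j < t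
    · rw [if_pos hjt]
      have h1 := Nat.find_min h hjt
      have h2 := ent_ge c j (by omega)
      have h3 := solcol_entry_le hc hk j hj
      simp only [not_and] at h1
      have := h1 hj
      omega
    · rw [if_neg hjt]
      exact hup j (by omega) hj
  · push_neg at h
    refine ⟨k - 1, le_refl _, ?_⟩
    intro j hj
    rw [if_pos (by omega)]
    have h1 := h j hj
    have h2 := ent_ge c j (by omega)
    have h3 := solcol_entry_le hc hk j hj
    omega

lemma mem_sigWord_iff' {c : RectTableau n k 1} {i : ℕ} :
    i ∈ sigWord c ↔ ∃ j, j < k ∧ ent c j = i := by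
  rw [mem_sigWord_iff]
  constructor
  · rintro ⟨r, hr⟩
    exact ⟨r.1, r.isLt, by rw [← ent_eq' c r ⟨0, Nat.one_pos⟩]; exact hr⟩
  · rintro ⟨j, hj, hent⟩
    refine ⟨⟨j, hj⟩, ?_⟩
    show c.entry ⟨j, hj⟩ ⟨0, Nat.one_pos⟩ = i
    rw [ent_eq' c ⟨j, hj⟩]
    exact hent

lemma mem_sigWord_solcol_low {c : RectTableau n k 1} (hc : SolCol c) (hk : 2 ≤ k) {t : ℕ}
    (ht : t ≤ k - 1)
    (hchar : ∀ (j : ℕ), j < k - 1 → ent c j = if j < t then j + 1 else j + 2)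
    {i : ℕ} (hi1 : 1 ≤ i) (hik : i ≤ k) : (i ∈ sigWord c ↔ i ≠ t + 1) := by
  rw [mem_sigWord_iff']
  constructor
  · rintro ⟨j, hj, hent⟩ hit
    by_cases hrk : j < k - 1
    · have h1 := hchar j hrk
      by_cases h3 : j < t
      · rw [if_pos h3] at h1; omega
      · rw [if_neg h3] at h1; omega
    · have hb := solcol_bot hc (by omega)
      have hjk : j = k - 1 := by omega
      subst hjk
      omega
  · intro hne
    rcases Nat.lt_or_ge i (t + 1) with h | h
    · refine ⟨i - 1, by omega, ?_⟩
      have := hchar (i - 1) (by omega)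
      rw [if_pos (by omega)] at this
      omega
    · have hi2 : t + 2 ≤ i := by omega
      refine ⟨i - 2, by omega, ?_⟩
      have := hchar (i - 2) (by omega)
      rw [if_neg (by omega)] at this
      omega

lemma mem_sigWord_solcol_high {c : RectTableau n k 1} (hc : SolCol c) (hk : 2 ≤ k) {i : ℕ}
    (hik : k < i) : (i ∈ sigWord c ↔ ent c (k - 1) = i) := by
  rw [mem_sigWord_iff']
  constructor
  · rintro ⟨j, hj, hent⟩
    by_cases hrk : j = k - 1
    · rw [← hrk]; exact hent
    · have h3 := solcol_entry_le hc hk j (by omega)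
      omega
  · intro h
    exact ⟨k - 1, by omega, h⟩

lemma colSgn_solcol_low {c : RectTableau n k 1} (hc : SolCol c) (hk : 2 ≤ k) {t : ℕ}
    (ht : t ≤ k - 1)
    (hchar : ∀ (j : ℕ), j < k - 1 → ent c j = if j < t then j + 1 else j + 2)
    {i : ℕ} (hi1 : 1 ≤ i) (hik : i ≤ k - 1) :
    colSgn i c = if t + 1 = i then some false
      else if t + 1 = i + 1 then some true else none := by
  have h1 := mem_sigWord_solcol_low hc hk ht hchar hi1 (by omega)
  have h2 := mem_sigWord_solcol_low hc hk ht hchar (i := i + 1) (by omega) (by omega)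
  unfold colSgn wordSgn
  by_cases e1 : t + 1 = i
  · rw [if_pos e1]
    rw [if_pos ⟨h2.mpr (by omega), fun hh => (h1.mp hh) e1.symm⟩]
  · rw [if_neg e1]
    by_cases e2 : t + 1 = i + 1
    · rw [if_pos e2]
      have m1 : i ∈ sigWord c := h1.mpr (by omega)
      have m2 : i + 1 ∉ sigWord c := fun hh => (h2.mp hh) e2.symm
      rw [if_neg (by tauto), if_pos ⟨m1, m2⟩]
    · have m1 : i ∈ sigWord c := h1.mpr (by omega)
      have m2 : i + 1 ∈ sigWord c := h2.mpr (by omega)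
      rw [if_neg (by tauto), if_neg (by tauto), if_neg e2]

lemma colSgn_solcol_high {c : RectTableau n k 1} (hc : SolCol c) (hk : 2 ≤ k) {i : ℕ}
    (hik : k < i) :
    colSgn i c = if ent c (k - 1) = i + 1 then some false
      else if ent c (k - 1) = i then some true else none := by
  have h1 := mem_sigWord_solcol_high hc hk (i := i) hik
  have h2 := mem_sigWord_solcol_high hc hk (i := i + 1) (by omega)
  unfold colSgn wordSgn
  by_cases e1 : ent c (k - 1) = i + 1
  · rw [if_pos e1]
    rw [if_pos ⟨h2.mpr e1, fun hh => by have := h1.mp hh; omega⟩]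
  · rw [if_neg e1]
    by_cases e2 : ent c (k - 1) = i
    · rw [if_pos e2]
      have m2 : i + 1 ∉ sigWord c := fun hh => by have := h2.mp hh; omega
      rw [if_neg (by tauto), if_pos ⟨h1.mpr e2, m2⟩]
    · have m1 : i ∉ sigWord c := fun hh => e2 (h1.mp hh)
      have m2 : i + 1 ∉ sigWord c := fun hh => e1 (h2.mp hh)
      rw [if_neg (by tauto), if_neg (by tauto), if_neg e2]

lemma ent_mkCol {m b : ℕ} (hm : k ≤ m + 1) (hb : m < b) (hn : b ≤ n) (j : ℕ) (hj : j < k) :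
    ent (mkCol n k m b hm hb hn) j = if j + 1 = k then b else if j + 2 = k then m else j + 1 := by
  rw [ent_eq _ j hj]
  rfl

lemma mem_sigWord_col0 (hk : 1 ≤ k) (hkn : k ≤ n) {i : ℕ} :
    i ∈ sigWord (col0 n k hk hkn) ↔ 1 ≤ i ∧ i ≤ k := by
  rw [mem_sigWord_iff']
  unfold col0
  constructor
  · rintro ⟨j, hj, hent⟩
    rw [ent_mkCol _ _ _ j hj] at hent
    split_ifs at hent <;> omega
  · rintro ⟨h1, h2⟩
    refine ⟨i - 1, by omega, ?_⟩
    rw [ent_mkCol _ _ _ (i - 1) (by omega)]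
    split_ifs <;> omega

lemma colSgn_col0 (hk : 1 ≤ k) (hkn : k ≤ n) {i : ℕ} (hi1 : 1 ≤ i) (hik : i ≠ k) :
    colSgn i (col0 n k hk hkn) = none := by
  unfold colSgn wordSgn
  by_cases h : i < k
  · have m1 : i ∈ sigWord (col0 n k hk hkn) := (mem_sigWord_col0 hk hkn).mpr ⟨hi1, by omega⟩
    have m2 : i + 1 ∈ sigWord (col0 n k hk hkn) := (mem_sigWord_col0 hk hkn).mpr ⟨by omega, by omega⟩
    rw [if_neg (by tauto), if_neg (by tauto)]
  · have m1 : i ∉ sigWord (col0 n k hk hkn) := fun hh => by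
      have := (mem_sigWord_col0 hk hkn).mp hh; omega
    have m2 : i + 1 ∉ sigWord (col0 n k hk hkn) := fun hh => by
      have := (mem_sigWord_col0 hk hkn).mp hh; omega
    rw [if_neg (by tauto), if_neg (by tauto)]

/-! ### Membership in the unpaired-minus list -/

lemma suF_mem {i : ℕ} : ∀ (l : List (ℕ × ℕ)) (st : List ℕ × List ℕ) (q : ℕ),
    q ∈ (l.foldl (suF i) st).1 → q ∈ st.1 ∨ ∃ x ∈ l, x.1 = q ∧ x.2 = i + 1 := by
  intro l
  induction l with
  | nil => intro st q h; exact Or.inl h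
  | cons a rest ih =>
    intro st q h
    rw [List.foldl_cons] at h
    rcases ih _ q h with h' | ⟨x, hx, h1, h2⟩
    · unfold suF at h'
      split_ifs at h' with hc1 hc2
      · exact Or.inl h'
      · rcases hst : st.2 with _ | ⟨y, ys⟩ <;> rw [hst] at h'
        · simp only at h'
          rcases List.mem_append.mp h' with h'' | h''
          · exact Or.inl h''
          · have : q = a.1 := by simpa using h''
            exact Or.inr ⟨a, List.mem_cons_self, this.symm, hc2⟩
        · exact Or.inl h'
      · exact Or.inl h'
    · exact Or.inr ⟨x, List.mem_cons_of_mem _ hx, h1, h2⟩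

lemma mem_sigUnpaired_fst {i : ℕ} {w : List ℕ} {q : ℕ} (h : q ∈ (sigUnpaired i w).1) :
    q < w.length ∧ w.getD q 0 = i + 1 := by
  rw [sigUnpaired_eq_foldl] at h
  rcases suF_mem _ _ _ h with h' | ⟨x, hx, h1, h2⟩
  · simp at h'
  · obtain ⟨a, b⟩ := x
    simp only at h1 h2
    subst h1; subst h2
    obtain ⟨⟨y1, y2⟩, hy, hyeq⟩ := List.mem_map.mp hx
    simp only [Prod.swap, Prod.mk.injEq] at hyeq
    obtain ⟨rfl, rfl⟩ := hyeq
    obtain ⟨hlt, hval⟩ := List.mem_zipIdx' hy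
    exact ⟨hlt, by rw [List.getD_eq_getElem _ _ hlt, ← hval]⟩

lemma not_mem_core {i : ℕ} (u v : List ℕ) :
    u.length + 1 ∉ (sigUnpaired i (u ++ i :: (i + 1) :: v)).1 := by
  intro hmem
  rw [sigUnpaired_eq_foldl] at hmem
  have henum : ((u ++ i :: (i + 1) :: v).zipIdx.map Prod.swap)
      = (u.zipIdx.map Prod.swap) ++ (u.length, i) :: (u.length + 1, i + 1)
          :: ((v.zipIdx (u.length + 2)).map Prod.swap) := by
    simp [List.zipIdx_append, Prod.swap, Nat.add_assoc]
  rw [henum, List.foldl_append, List.foldl_cons, List.foldl_cons] at hmem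
  set st := (u.zipIdx.map Prod.swap).foldl (suF i) ([], []) with hst
  have s1 : suF i st (u.length, i) = (st.1, u.length :: st.2) := by
    simp [suF]
  have s2 : suF i (st.1, u.length :: st.2) (u.length + 1, i + 1) = (st.1, st.2) := by
    simp [suF]
  rw [s1, s2] at hmem
  rcases suF_mem _ _ _ hmem with h' | ⟨x, hx, h1, h2⟩
  · simp only at h'
    rcases suF_mem _ _ _ h' with h'' | ⟨x, hx, h1, h2⟩
    · simp at h''
    · obtain ⟨a, b⟩ := x
      simp only at h1 h2
      subst h1
      obtain ⟨⟨y1, y2⟩, hy, hyeq⟩ := List.mem_map.mp hx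
      simp only [Prod.swap, Prod.mk.injEq] at hyeq
      have hmem2 : y2 < 0 + u.length := List.snd_lt_add_of_mem_zipIdx hy
      omega
  · obtain ⟨a, b⟩ := x
    simp only at h1 h2
    subst h1
    obtain ⟨⟨y1, y2⟩, hy, hyeq⟩ := List.mem_map.mp hx
    simp only [Prod.swap, Prod.mk.injEq] at hyeq
    have hmem2 : u.length + 2 ≤ y2 := List.le_snd_of_mem_zipIdx hy
    omega

lemma not_mem_sigUnpaired_pair {i : ℕ} {w : List ℕ} {q : ℕ} (hq1 : 1 ≤ q) (hq2 : q < w.length)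
    (hprev : w.getD (q - 1) 0 = i) (hcur : w.getD q 0 = i + 1) :
    q ∉ (sigUnpaired i w).1 := by
  obtain ⟨q', rfl⟩ : ∃ q', q = q' + 1 := ⟨q - 1, by omega⟩
  simp only [Nat.add_sub_cancel] at hprev
  rw [List.getD_eq_getElem _ _ (by omega : q' < w.length)] at hprev
  rw [List.getD_eq_getElem _ _ hq2] at hcur
  have hdec : w = w.take q' ++ i :: (i + 1) :: w.drop (q' + 2) := by
    conv_lhs => rw [← List.take_append_drop q' w]
    congr 1
    rw [List.drop_eq_getElem_cons (by omega : q' < w.length)]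
    have h2 : w.drop (q' + 1) = w[q' + 1] :: w.drop (q' + 2) := List.drop_eq_getElem_cons hq2
    rw [h2, hprev, hcur]
  have key := not_mem_core (i := i) (w.take q') (w.drop (q' + 2))
  rw [← hdec] at key
  have hlq : (w.take q').length = q' := by
    rw [List.length_take]
    omega
  rw [hlq] at key
  exact key

/-! ### Words of lists of columns, via `getD` -/

lemma flatMap_sigWord_length (p : List (RectTableau n k 1)) :
    (p.flatMap sigWord).length = k * p.length := by
  induction p with
  | nil => simp
  | cons c rest ih =>
    rw [List.flatMap_cons, List.length_append, ih, sigWord_length, List.length_cons]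
    ring

lemma sigWord_getD (c : RectTableau n k 1) (j : ℕ) (hj : j < k) :
    (sigWord c).getD j 0 = ent c j := by
  have hj' : j < (sigWord c).length := by rw [sigWord_length]; exact hj
  rw [List.getD_eq_getElem _ _ hj', sigWord_getElem, ent_eq c j hj]
  exact rfl

lemma flatMap_sigWord_getD (d0 : RectTableau n k 1) (hk : 0 < k) :
    ∀ (p : List (RectTableau n k 1)) (j : ℕ), j < k * p.length →
    (p.flatMap sigWord).getD j 0 = ent (p.getD (j / k) d0) (j % k) := by
  intro p
  induction p with
  | nil => intro j hj; simp at hj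
  | cons c rest ih =>
    intro j hj
    by_cases hjk : j < k
    · have hj1 : j < (sigWord c).length := by rw [sigWord_length]; exact hjk
      rw [List.flatMap_cons, List.getD_append _ _ _ _ hj1, sigWord_getD c j hjk,
        Nat.div_eq_of_lt hjk, Nat.mod_eq_of_lt hjk, List.getD_cons_zero]
    · obtain ⟨j', rfl⟩ : ∃ j', j = k + j' := ⟨j - k, by omega⟩
      have hlen : (sigWord c).length ≤ k + j' := by rw [sigWord_length]; omega
      have hj2 : j' < k * rest.length := by
        rw [List.length_cons] at hj
        have : k * (rest.length + 1) = k * rest.length + k := by ring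
        omega
      rw [List.flatMap_cons, List.getD_append_right _ _ _ _ hlen, sigWord_length]
      have e1 : k + j' - k = j' := by omega
      rw [e1, ih j' hj2]
      have hd : (k + j') / k = j' / k + 1 := by
        rw [Nat.add_comm k j', Nat.add_div_right _ hk]
      have hm : (k + j') % k = j' % k := by
        rw [Nat.add_comm k j', Nat.add_mod_right]
      rw [hd, hm, List.getD_cons_succ]

/-! ### The closure lemma -/

lemma closure (hk : 1 ≤ k) {i : ℕ} (hi1 : 1 ≤ i) (p : List (RectTableau n k 1)) (w' : List ℕ)
    (h : eWord i (p.flatMap sigWord) = some w') :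
    ∃ q : List (RectTableau n k 1), q.length = p.length ∧ q.flatMap sigWord = w' := by
  classical
  set w := p.flatMap sigWord with hw
  unfold eWord at h
  rcases hl : (sigUnpaired i w).1.getLast? with _ | pos
  · rw [hl] at h; exact absurd h (by simp)
  rw [hl] at h
  have hw' : w' = w.set pos i := by
    have := h
    simp only [Option.some.injEq] at this
    exact this.symm
  have hpos : pos ∈ (sigUnpaired i w).1 := List.mem_of_getLast? hl
  obtain ⟨hlt, hval⟩ := mem_sigUnpaired_fst hpos
  have hk0 : 0 < k := hk
  have hlen : w.length = k * p.length := flatMap_sigWord_length p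
  have hplen : 0 < p.length := by
    by_contra hx
    have hx2 : p.length = 0 := by omega
    rw [hx2, Nat.mul_zero] at hlen
    omega
  obtain ⟨c0, p', hp⟩ : ∃ c0 p', p = c0 :: p' := by
    rcases p with _ | ⟨c0, p'⟩
    · simp at hplen
    · exact ⟨c0, p', rfl⟩
  -- opaque versions of pos / k and pos % k
  obtain ⟨dp, hdp⟩ : ∃ d, pos / k = d := ⟨_, rfl⟩
  obtain ⟨rp, hrp⟩ : ∃ r', pos % k = r' := ⟨_, rfl⟩
  have hrb : rp < k := hrp ▸ Nat.mod_lt _ hk0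
  have hposr : pos = k * dp + rp := by
    rw [← hdp, ← hrp]
    exact (Nat.div_add_mod pos k).symm
  set c := p.getD dp c0 with hc
  have hentry : ent c rp = i + 1 := by
    rw [hc, ← hdp, ← hrp, ← flatMap_sigWord_getD c0 hk0 p pos (by omega)]
    exact hval
  have hcb : dp < p.length := by
    rcases Nat.lt_or_ge dp p.length with hgood | hbad
    · exact hgood
    · exfalso
      have h4 : k * p.length ≤ k * dp := Nat.mul_le_mul (le_refl k) hbad
      omega
  -- the entry above (if any) is ≠ i
  have hup : 1 ≤ rp → ent c (rp - 1) ≠ i := by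
    intro hr1 hcontra
    have hpos1 : pos - 1 = k * dp + (rp - 1) := by omega
    have hd1 : (pos - 1) / k = dp := by
      rw [hpos1, Nat.mul_add_div hk0, Nat.div_eq_of_lt (by omega), Nat.add_zero]
    have hm1 : (pos - 1) % k = rp - 1 := by
      rw [hpos1, Nat.mul_add_mod, Nat.mod_eq_of_lt (by omega)]
    have hprev : w.getD (pos - 1) 0 = i := by
      rw [hw, flatMap_sigWord_getD c0 hk0 p (pos - 1) (by omega), hd1, hm1]
      exact hcontra
    exact not_mem_sigUnpaired_pair (by omega) hlt hprev hval hpos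
  have hin : i + 1 ≤ n := by
    have := ent_le c rp hrb
    omega
  -- the modified column
  refine ⟨p.set dp ⟨fun a b => if a.1 = rp then i else c.entry a b, ?_, ?_, ?_, ?_⟩,
    by rw [List.length_set], ?_⟩
  · intro a b
    (try dsimp only)
    split_ifs
    · exact hi1
    · exact c.entry_pos a b
  · intro a b
    (try dsimp only)
    split_ifs
    · omega
    · exact c.entry_le a b
  · intro a
    exact monotone_iff_forall_lt.mpr fun x y hxy => by
      have hxy2 : x = y := Subsingleton.elim x y
      rw [hxy2]
  · intro j a b hab
    dsimp only
    have hab' : a.1 < b.1 := hab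
    have hbk := b.isLt
    by_cases ha : a.1 = rp <;> by_cases hb : b.1 = rp
    · omega
    · rw [if_pos ha, if_neg hb]
      have h1 : ent c rp < ent c b.1 := ent_lt c (by omega) b.isLt
      rw [ent_eq' c b j] at *
      omega
    · rw [if_neg ha, if_pos hb]
      have h1 : ent c a.1 ≤ ent c (rp - 1) := ent_mono c (by omega) (by omega)
      have h2 : ent c (rp - 1) < ent c rp := ent_lt c (by omega) (by omega)
      have h3 := hup (by omega)
      rw [ent_eq' c a j] at *
      omega
    · rw [if_neg ha, if_neg hb]
      exact c.col_strict j hab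
  · -- the word equality
    rw [hw']
    set cnew : RectTableau n k 1 :=
      ⟨fun a b => if a.1 = rp then i else c.entry a b, _, _, _, _⟩ with hcnew
    have hentnew : ∀ (m : ℕ), m < k → ent cnew m = if m = rp then i else ent c m := by
      intro m hm
      rw [ent_eq _ _ hm]
      show (if m = rp then i else c.entry ⟨m, hm⟩ z1) = _
      by_cases hmr : m = rp
      · rw [if_pos hmr, if_pos hmr]
      · rw [if_neg hmr, if_neg hmr, ent_eq c m hm]
    apply List.ext_getElem
    · rw [flatMap_sigWord_length, List.length_set, List.length_set]
      exact hlen.symm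
    · intro m h1 h2
      have hm : m < k * p.length := by
        rw [flatMap_sigWord_length, List.length_set] at h1
        exact h1
      rw [← List.getD_eq_getElem _ 0 h1, ← List.getD_eq_getElem _ 0 h2]
      rw [flatMap_sigWord_getD c0 hk0 _ m (by rw [List.length_set]; exact hm)]
      obtain ⟨dm, hdm⟩ : ∃ d, m / k = d := ⟨_, rfl⟩
      obtain ⟨rm, hrm⟩ : ∃ r', m % k = r' := ⟨_, rfl⟩
      have hrmk : rm < k := hrm ▸ Nat.mod_lt _ hk0
      have hmdec : m = k * dm + rm := by
        rw [← hdm, ← hrm]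
        exact (Nat.div_add_mod m k).symm
      rw [hdm, hrm]
      have hmd : dm < p.length := by
        rcases Nat.lt_or_ge dm p.length with hgood | hbad
        · exact hgood
        · exfalso
          have h4 : k * p.length ≤ k * dm := Nat.mul_le_mul (le_refl k) hbad
          omega
      have hset : (w.set pos i).getD m 0 = if pos = m then i else w.getD m 0 := by
        have hq : m < w.length := by omega
        have hq2 : m < (w.set pos i).length := by rw [List.length_set]; exact hq
        rw [List.getD_eq_getElem _ _ hq2, List.getElem_set, List.getD_eq_getElem _ _ hq]
      rw [hset]
      by_cases hdmeq : dp = dm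
      · have hgd : (p.set dp cnew).getD dm c0 = cnew := by
          rw [← hdmeq]
          have hlt2 : dp < (p.set dp cnew).length := by
            rw [List.length_set]; exact hcb
          rw [List.getD_eq_getElem _ _ hlt2, List.getElem_set, if_pos rfl]
        erw [hgd, hentnew _ hrmk]
        by_cases hpm : pos = m
        · have e3 : pos = k * dm + rp := by rw [hposr, hdmeq]
          have e4 : rm = rp := by omega
          rw [if_pos hpm, if_pos e4]
        · have hmr : ¬ (rm = rp) := by
            intro hx
            apply hpm
            have e3 : pos = k * dm + rp := by rw [hposr, hdmeq]
            omega
          rw [if_neg hpm, if_neg hmr, hw, flatMap_sigWord_getD c0 hk0 p m hm, hdm, hrm, hc, hdmeq]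
      · have hgd : (p.set dp cnew).getD dm c0 = p.getD dm c0 := by
          have hlt2 : dm < (p.set dp cnew).length := by
            rw [List.length_set]; exact hmd
          rw [List.getD_eq_getElem _ _ hlt2, List.getElem_set, if_neg hdmeq,
            List.getD_eq_getElem _ _ hmd]
        have hpm : ¬ (pos = m) := by
          intro hx
          apply hdmeq
          rw [← hdp, ← hdm, hx]
        erw [hgd, if_neg hpm, hw, flatMap_sigWord_getD c0 hk0 p m hm, hdm, hrm]

/-! ### `eList` in terms of the ballot state -/

lemma eList_eq_none_iff (hk : 1 ≤ k) {i : ℕ} (hi : 1 ≤ i) (p : List (RectTableau n k 1)) :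
    eList i p = none
      ↔ ((p.map (colSgn i)).foldl (fun s o => applyS o s) (0, 0)).1 = 0 := by
  have hiff : eWord i (p.flatMap sigWord) = none
      ↔ ((p.map (colSgn i)).foldl (fun s o => applyS o s) (0, 0)).1 = 0 := by
    rw [eWord_eq_none_iff, foldl_stepE_flatMap]
  constructor
  · intro h
    rcases h' : eWord i (p.flatMap sigWord) with _ | w'
    · exact hiff.mp h'
    · exfalso
      obtain ⟨q, hq1, hq2⟩ := closure hk hi p w' h'
      have hex : ∃ q : List (RectTableau n k 1), q.length = p.length ∧ q.flatMap sigWord = w' :=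
        ⟨q, hq1, hq2⟩
      unfold eList at h
      rw [h'] at h
      simp only [dif_pos hex] at h
      cases h
  · intro h
    unfold eList
    rw [hiff.mpr h]

/-! ### Equality of tableaux, `mkCol` characterizations -/

lemma RectTableau.ext' {x y : RectTableau n k l} (h : ∀ i j, x.entry i j = y.entry i j) :
    x = y := by
  cases x with
  | mk e p le m s =>
    cases y with
    | mk e' p' le' m' s' =>
      have he : e = e' := funext fun i => funext fun j => h i j
      subst he
      rfl

lemma solCol_mkCol {m b : ℕ} (hm : k ≤ m + 1) (hb : m < b) (hn : b ≤ n) (hm2 : m ≤ k)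
    (hkb : k < b) : SolCol (mkCol n k m b hm hb hn) := by
  constructor
  · intro i hi
    rw [ent_eq' _ i z1, ent_mkCol _ _ _ _ i.isLt, if_pos hi]
    exact hkb
  · intro i hi
    rw [ent_eq' _ i z1, ent_mkCol _ _ _ _ i.isLt, if_neg (by omega), if_pos hi]
    exact hm2

lemma char_mkCol_low {b : ℕ} (hk : 2 ≤ k) (hm : k ≤ (k - 1) + 1) (hb : k - 1 < b) (hn : b ≤ n) :
    ∀ j, j < k - 1 →
      ent (mkCol n k (k - 1) b hm hb hn) j = if j < k - 1 then j + 1 else j + 2 := by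
  intro j hj
  rw [ent_mkCol _ _ _ j (by omega), if_neg (by omega), if_pos hj]
  split_ifs <;> omega

lemma char_mkCol_high {b : ℕ} (hk : 2 ≤ k) (hm : k ≤ k + 1) (hb : k < b) (hn : b ≤ n) :
    ∀ j, j < k - 1 →
      ent (mkCol n k k b hm hb hn) j = if j < k - 2 then j + 1 else j + 2 := by
  intro j hj
  rw [ent_mkCol _ _ _ j (by omega), if_neg (by omega)]
  split_ifs <;> omega

lemma bot_mkCol {m b : ℕ} (hm : k ≤ m + 1) (hb : m < b) (hn : b ≤ n) (hk : 1 ≤ k) :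
    ent (mkCol n k m b hm hb hn) (k - 1) = b := by
  rw [ent_mkCol _ _ _ (k - 1) (by omega), if_pos (by omega)]

/-- A soliton column is determined by its staircase jump and bottom entry. -/
lemma eq_mkCol {c : RectTableau n k 1} (hk : 2 ≤ k) {t b m : ℕ}
    (hchar : ∀ j, j < k - 1 → ent c j = if j < t then j + 1 else j + 2)
    (hbot : ent c (k - 1) = b)
    (ht : (t = k - 1 ∧ m = k - 1) ∨ (t = k - 2 ∧ m = k))
    (hm : k ≤ m + 1) (hb : m < b) (hn : b ≤ n) :
    c = mkCol n k m b hm hb hn := by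
  apply RectTableau.ext'
  intro a j
  have hj : j = z1 := Subsingleton.elim _ _
  subst hj
  rw [ent_eq' c a z1, ent_eq' _ a z1, ent_mkCol _ _ _ _ a.isLt]
  rcases Nat.lt_or_ge (a.1 + 1) k with hak | hak
  · have hchar' := hchar a.1 (by omega)
    rw [hchar']
    rcases ht with ⟨ht1, hm1⟩ | ⟨ht1, hm1⟩ <;> subst ht1 <;> subst hm1 <;> split_ifs <;> omega
  · have hae : (a.1 : ℕ) = k - 1 := by have := a.isLt; omega
    rw [hae, hbot, if_pos (by omega)]

/-! ### Soliton sequences -/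

lemma isSolitonFn_solcol {d : ℕ} {S : Fin d → RectTableau n k 1} (hS : IsSolitonFn S)
    (j : Fin d) : SolCol (S j) :=
  ⟨fun i hi => hS.2.1 j i z1 hi, fun i hi => hS.2.2 j i z1 hi⟩

lemma soliton_ent_anti {d : ℕ} {S : Fin d → RectTableau n k 1} (hS : IsSolitonFn S) :
    ∀ (a b : Fin d), a.1 ≤ b.1 → ∀ m, ent (S b) m ≤ ent (S a) m := by
  have step : ∀ (a b : Fin d), a.1 + 1 = b.1 → ∀ m, ent (S b) m ≤ ent (S a) m := by
    intro a b hab m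
    by_cases hm : m < k
    · rw [ent_eq _ m hm, ent_eq _ m hm]
      exact hS.1 a b hab ⟨m, hm⟩ z1
    · unfold ent
      rw [dif_neg hm, dif_neg hm]
  have key : ∀ (t : ℕ) (a b : Fin d), a.1 + t = b.1 → ∀ m, ent (S b) m ≤ ent (S a) m := by
    intro t
    induction t with
    | zero =>
      intro a b hab m
      have : a = b := Fin.ext (by omega)
      rw [this]
    | succ u ih =>
      intro a b hab m
      have hmid : a.1 + u < d := by have := b.isLt; omega
      exact le_trans (step ⟨a.1 + u, hmid⟩ b (by simp; omega) m) (ih a ⟨a.1 + u, hmid⟩ (by simp) m)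
  intro a b hab m
  exact key (b.1 - a.1) a b (by omega) m

/-- The staircase jump is monotone along a soliton. -/
lemma t_mono {c c' : RectTableau n k 1} (hk : 2 ≤ k) {t t' : ℕ}
    (hchar : ∀ j, j < k - 1 → ent c j = if j < t then j + 1 else j + 2)
    (hchar' : ∀ j, j < k - 1 → ent c' j = if j < t' then j + 1 else j + 2)
    (hle : ∀ m, ent c' m ≤ ent c m) (ht : t ≤ k - 1) (ht' : t' ≤ k - 1) : t ≤ t' := by
  by_contra hx
  push_neg at hx
  have h1 := hchar t' (by omega)
  have h2 := hchar' t' (by omega)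
  rw [if_pos hx] at h1
  rw [if_neg (by omega)] at h2
  have := hle t'
  omega

/-! ### Splitting `ofFn` of a piecewise-constant function -/

lemma ofFn_ite3 {γ : Type*} (x y z : γ) {a b d : ℕ} (hab : a ≤ b) (hbd : b ≤ d) :
    List.ofFn (fun j : Fin d => if j.1 < a then x else if j.1 < b then y else z)
      = List.replicate a x ++ List.replicate (b - a) y ++ List.replicate (d - b) z := by
  apply List.ext_getElem
  · simp
    omega
  · intro m h1 h2
    rw [List.getElem_ofFn]
    by_cases hma : m < a
    · rw [List.getElem_append_left (by simp [List.length_append]; omega),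
        List.getElem_append_left (by simp; exact hma), List.getElem_replicate]
      simp [hma]
    · by_cases hmb : m < b
      · rw [List.getElem_append_left (by simp [List.length_append]; omega),
          List.getElem_append_right (by simp; omega), List.getElem_replicate]
        simp [hma, hmb]
      · rw [List.getElem_append_right (by simp [List.length_append]; omega),
          List.getElem_replicate]
        simp [hma, hmb]

/-! ### Signs of the specific columns -/

lemma sgn_col1 (hk : 2 ≤ k) {i : ℕ} (hi1 : 1 ≤ i) (hik : i ≠ k) (h1 : 1 ≤ k) (h2 : k + 1 ≤ n) :
    colSgn i (col1 n k h1 h2) = if i = k - 1 ∨ i = k + 1 then some true else none := by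
  rw [show col1 n k h1 h2 = mkCol n k (k - 1) (k + 1) (by omega) (by omega) (by omega) from rfl]
  have hsol : SolCol (mkCol n k (k - 1) (k + 1) (by omega) (by omega) (by omega) : RectTableau n k 1) :=
    solCol_mkCol _ _ _ (by omega) (by omega)
  rcases Nat.lt_or_ge i k with hlow | hhigh
  · rw [colSgn_solcol_low hsol hk (le_refl _) (char_mkCol_low hk _ _ _) hi1 (by omega)]
    rw [if_neg (by omega)]
    by_cases he : i = k - 1
    · rw [if_pos (by omega), if_pos (by omega)]
    · rw [if_neg (by omega), if_neg (by omega)]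
  · have hhigh' : k < i := by omega
    rw [colSgn_solcol_high hsol hk hhigh', bot_mkCol _ _ _ (by omega)]
    rw [if_neg (by omega)]
    by_cases he : i = k + 1
    · rw [if_pos (by omega), if_pos (by omega)]
    · rw [if_neg (by omega), if_neg (by omega)]

lemma sgn_col2p (hk : 2 ≤ k) {i : ℕ} (hi1 : 1 ≤ i) (hik : i ≠ k) (h1 : 1 ≤ k) (h2 : k + 1 ≤ n) :
    colSgn i (col2p n k h1 h2)
      = if i = k - 2 ∨ i = k + 1 then some true
        else if i = k - 1 then some false else none := by
  rw [show col2p n k h1 h2 = mkCol n k k (k + 1) (by omega) (by omega) (by omega) from rfl]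
  have hsol : SolCol (mkCol n k k (k + 1) (by omega) (by omega) (by omega) : RectTableau n k 1) :=
    solCol_mkCol _ _ _ (by omega) (by omega)
  rcases Nat.lt_or_ge i k with hlow | hhigh
  · rw [colSgn_solcol_low hsol hk (by omega) (char_mkCol_high hk _ _ _) hi1 (by omega)]
    by_cases he : i = k - 1
    · rw [if_pos (by omega), if_neg (by omega), if_pos he]
    · rw [if_neg (by omega)]
      by_cases he2 : i = k - 2
      · rw [if_pos (by omega), if_pos (by omega)]
      · rw [if_neg (by omega), if_neg (by omega), if_neg he]
  · have hhigh' : k < i := by omega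
    rw [colSgn_solcol_high hsol hk hhigh', bot_mkCol _ _ _ (by omega)]
    rw [if_neg (by omega)]
    by_cases he : i = k + 1
    · rw [if_pos (by omega), if_pos (by omega)]
    · rw [if_neg (by omega), if_neg (by omega), if_neg (by omega)]

lemma sgn_col2m (hk : 2 ≤ k) {i : ℕ} (hi1 : 1 ≤ i) (hik : i ≠ k) (h1 : 1 ≤ k) (h2 : k + 2 ≤ n) :
    colSgn i (col2m n k h1 h2)
      = if i = k - 1 ∨ i = k + 2 then some true
        else if i = k + 1 then some false else none := by
  rw [show col2m n k h1 h2 = mkCol n k (k - 1) (k + 2) (by omega) (by omega) (by omega) from rfl]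
  have hsol : SolCol (mkCol n k (k - 1) (k + 2) (by omega) (by omega) (by omega) : RectTableau n k 1) :=
    solCol_mkCol _ _ _ (by omega) (by omega)
  rcases Nat.lt_or_ge i k with hlow | hhigh
  · rw [colSgn_solcol_low hsol hk (le_refl _) (char_mkCol_low hk _ _ _) hi1 (by omega)]
    rw [if_neg (by omega)]
    by_cases he : i = k - 1
    · rw [if_pos (by omega), if_pos (by omega)]
    · rw [if_neg (by omega), if_neg (by omega), if_neg (by omega)]
  · have hhigh' : k < i := by omega
    rw [colSgn_solcol_high hsol hk hhigh', bot_mkCol _ _ _ (by omega)]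
    by_cases he : i = k + 1
    · rw [if_pos (by omega), if_neg (by omega), if_pos he]
    · rw [if_neg (by omega)]
      by_cases he2 : i = k + 2
      · rw [if_pos (by omega), if_pos (by omega)]
      · rw [if_neg (by omega), if_neg (by omega), if_neg he]

lemma sgn_col3 (hk : 2 ≤ k) {i : ℕ} (hi1 : 1 ≤ i) (hik : i ≠ k) (h1 : 1 ≤ k) (h2 : k + 2 ≤ n) :
    colSgn i (col3 n k h1 h2)
      = if i = k - 2 ∨ i = k + 2 then some true
        else if i = k - 1 ∨ i = k + 1 then some false else none := by
  rw [show col3 n k h1 h2 = mkCol n k k (k + 2) (by omega) (by omega) (by omega) from rfl]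
  have hsol : SolCol (mkCol n k k (k + 2) (by omega) (by omega) (by omega) : RectTableau n k 1) :=
    solCol_mkCol _ _ _ (by omega) (by omega)
  rcases Nat.lt_or_ge i k with hlow | hhigh
  · rw [colSgn_solcol_low hsol hk (by omega) (char_mkCol_high hk _ _ _) hi1 (by omega)]
    by_cases he : i = k - 1
    · rw [if_pos (by omega), if_neg (by omega), if_pos (by omega)]
    · rw [if_neg (by omega)]
      by_cases he2 : i = k - 2
      · rw [if_pos (by omega), if_pos (by omega)]
      · rw [if_neg (by omega), if_neg (by omega), if_neg (by omega)]
  · have hhigh' : k < i := by omega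
    rw [colSgn_solcol_high hsol hk hhigh', bot_mkCol _ _ _ (by omega)]
    by_cases he : i = k + 1
    · rw [if_pos (by omega), if_neg (by omega), if_pos (by omega)]
    · rw [if_neg (by omega)]
      by_cases he2 : i = k + 2
      · rw [if_pos (by omega), if_pos (by omega)]
      · rw [if_neg (by omega), if_neg (by omega), if_neg (by omega)]

lemma ofFn_eq_cons {γ : Type*} {d : ℕ} (hd : 0 < d) (f : Fin d → γ) :
    List.ofFn f = f ⟨0, hd⟩ :: List.ofFn (fun j : Fin (d - 1) => f ⟨j.1 + 1, by omega⟩) := by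
  cases d with
  | zero => omega
  | succ m =>
    rw [List.ofFn_succ]
    rfl
end BBS
open BBS in
/-- the highest weight elements among two soliton states (i.e. those killed by
`e_i` for all `i ∈ I \ {0,k}`) are exactly the states
`[𝟎]^{⊗c₁} ⊗ [𝟏]^{⊗d₁} ⊗ [𝟎]^{⊗(c₂-c₁-d₁)} ⊗ [𝟑]^{⊗α} ⊗ [𝟐_±]^{⊗(d₂-α-β)} ⊗ [𝟏]^{⊗β} ⊗ [𝟎]^{⊗(L-c₂-d₂)}`
with `0 ≤ α + β ≤ d₂`. -/
theorem highest_weight_two_solitons {n k : ℕ} (hk : 2 ≤ k) (hkn : k + 2 ≤ n)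
    (c1 d1 c2 d2 h2 : ℕ) (hd21 : d2 < d1) (hd2 : 1 ≤ d2) (hsep : c1 + d1 + d2 ≤ c2)
    (S1 : Fin d1 → RectTableau n k 1) (S2 : Fin d2 → RectTableau n k 1)
    (hS1 : IsSolitonFn S1) (hS2 : IsSolitonFn S2) :
    (∀ i : ℕ, 1 ≤ i → i < n → i ≠ k →
        eList i (List.replicate c1 (col0 n k (by omega) (by omega)) ++ List.ofFn S1 ++
          List.replicate (c2 - c1 - d1) (col0 n k (by omega) (by omega)) ++ List.ofFn S2 ++
          List.replicate h2 (col0 n k (by omega) (by omega))) = none)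
    ↔ ∃ (α β : ℕ) (s : Bool), α + β ≤ d2 ∧
        (∀ j : Fin d1, S1 j = col1 n k (by omega) (by omega)) ∧
        (∀ j : Fin d2, S2 j =
          if j.1 < α then col3 n k (by omega) (by omega)
          else if j.1 < d2 - β then
            (if s then col2p n k (by omega) (by omega) else col2m n k (by omega) (by omega))
          else col1 n k (by omega) (by omega)) := by
  constructor
  · -- forward direction
    intro H
    have hball : ∀ i : ℕ, 1 ≤ i → i < n → i ≠ k →
        (((List.replicate c1 (col0 n k (by omega) (by omega)) ++ List.ofFn S1 ++
            List.replicate (c2 - c1 - d1) (col0 n k (by omega) (by omega)) ++ List.ofFn S2 ++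
            List.replicate h2 (col0 n k (by omega) (by omega))).map (colSgn i)).foldl
          (fun s o => applyS o s) (0, 0)).1 = 0 := by
      intro i h1 h2' h3
      exact (eList_eq_none_iff (by omega) h1 _).mp (H i h1 h2' h3)
    have viol : ∀ i : ℕ, 1 ≤ i → i < n → i ≠ k → ∀ (A Cs : List (Option Bool)),
        ((List.replicate c1 (col0 n k (by omega) (by omega)) ++ List.ofFn S1 ++
            List.replicate (c2 - c1 - d1) (col0 n k (by omega) (by omega)) ++ List.ofFn S2 ++
            List.replicate h2 (col0 n k (by omega) (by omega))).map (colSgn i))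
          = A ++ some false :: Cs → (∀ o ∈ A, o = none) → False := by
      intro i h1 h2' h3 A Cs hEq hA
      have hb := hball i h1 h2' h3
      rw [hEq] at hb
      exact ballot_pos A Cs hA hb
    have hsol1 : ∀ j, SolCol (S1 j) := isSolitonFn_solcol hS1
    have hsol2 : ∀ j, SolCol (S2 j) := isSolitonFn_solcol hS2
    choose T1 hT1le hT1char using fun j => solcol_char (hsol1 j) hk
    choose T2 hT2le hT2char using fun j => solcol_char (hsol2 j) hk
    have hd1pos : 0 < d1 := by omega
    have hd2pos : 0 < d2 := hd2
    have hmap1 : ∀ (i : ℕ), 1 ≤ i → i ≠ k → colSgn i (S1 ⟨0, hd1pos⟩) = some false →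
        ((List.replicate c1 (col0 n k (by omega) (by omega)) ++ List.ofFn S1 ++
            List.replicate (c2 - c1 - d1) (col0 n k (by omega) (by omega)) ++ List.ofFn S2 ++
            List.replicate h2 (col0 n k (by omega) (by omega))).map (colSgn i))
          = List.replicate c1 (none : Option Bool) ++ some false ::
            ((List.ofFn fun j : Fin (d1 - 1) => colSgn i (S1 ⟨j.1 + 1, by omega⟩)) ++
              (List.replicate (c2 - c1 - d1) none ++
                (List.ofFn (colSgn i ∘ S2) ++ List.replicate h2 none))) := by
      intro i h1 h3 hfalse
      rw [List.map_append, List.map_append, List.map_append, List.map_append,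
        List.map_replicate, List.map_replicate, List.map_replicate, List.map_ofFn,
        List.map_ofFn, colSgn_col0 (by omega) (by omega) h1 h3,
        ofFn_eq_cons hd1pos (colSgn i ∘ S1)]
      simp only [Function.comp_apply, List.append_assoc, List.cons_append, hfalse]
    have hb1_first : ent (S1 ⟨0, hd1pos⟩) (k - 1) = k + 1 := by
      have hgt : k < ent (S1 ⟨0, hd1pos⟩) (k - 1) := solcol_bot (hsol1 _) (by omega)
      by_contra hne
      have hbn : ent (S1 ⟨0, hd1pos⟩) (k - 1) ≤ n := ent_le _ _ (by omega)
      have hsg : colSgn (ent (S1 ⟨0, hd1pos⟩) (k - 1) - 1) (S1 ⟨0, hd1pos⟩) = some false := by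
        rw [colSgn_solcol_high (hsol1 _) hk (by omega), if_pos (by omega)]
      exact viol _ (by omega) (by omega) (by omega) _ _
        (hmap1 _ (by omega) (by omega) hsg) (fun o ho => List.eq_of_mem_replicate ho)
    have ht1_first : T1 ⟨0, hd1pos⟩ = k - 1 := by
      by_contra hne
      have h1le := hT1le ⟨0, hd1pos⟩
      have hsg : colSgn (T1 ⟨0, hd1pos⟩ + 1) (S1 ⟨0, hd1pos⟩) = some false := by
        rw [colSgn_solcol_low (hsol1 _) hk (hT1le _) (hT1char _) (by omega) (by omega),
          if_pos rfl]
      exact viol _ (by omega) (by omega) (by omega) _ _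
        (hmap1 _ (by omega) (by omega) hsg) (fun o ho => List.eq_of_mem_replicate ho)
    have ht1_all : ∀ j, T1 j = k - 1 := by
      intro j
      have hmono := t_mono hk (hT1char ⟨0, hd1pos⟩) (hT1char j)
        (fun m => soliton_ent_anti hS1 ⟨0, hd1pos⟩ j (Nat.zero_le _) m) (hT1le _) (hT1le j)
      have := hT1le j
      omega
    have hb1_all : ∀ j, ent (S1 j) (k - 1) = k + 1 := by
      intro j
      have ha := soliton_ent_anti hS1 ⟨0, hd1pos⟩ j (Nat.zero_le _) (k - 1)
      have hb := solcol_bot (hsol1 j) (by omega)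
      omega
    have hS1col1 : ∀ j, S1 j = col1 n k (by omega) (by omega) := by
      intro j
      have hc := hT1char j
      rw [ht1_all j] at hc
      exact eq_mkCol hk hc (hb1_all j) (Or.inl ⟨rfl, rfl⟩) (by omega) (by omega) (by omega)
    have hmap2 : ∀ (i : ℕ), 1 ≤ i → i ≠ k →
        colSgn i (col1 n k (by omega) (by omega)) = none →
        colSgn i (S2 ⟨0, hd2pos⟩) = some false →
        ((List.replicate c1 (col0 n k (by omega) (by omega)) ++ List.ofFn S1 ++
            List.replicate (c2 - c1 - d1) (col0 n k (by omega) (by omega)) ++ List.ofFn S2 ++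
            List.replicate h2 (col0 n k (by omega) (by omega))).map (colSgn i))
          = (List.replicate c1 (none : Option Bool) ++
              (List.replicate d1 none ++ List.replicate (c2 - c1 - d1) none)) ++ some false ::
            ((List.ofFn fun j : Fin (d2 - 1) => colSgn i (S2 ⟨j.1 + 1, by omega⟩)) ++
              List.replicate h2 none) := by
      intro i h1 h3 hnone hfalse
      rw [List.map_append, List.map_append, List.map_append, List.map_append,
        List.map_replicate, List.map_replicate, List.map_replicate, List.map_ofFn,
        List.map_ofFn, colSgn_col0 (by omega) (by omega) h1 h3,
        ofFn_eq_cons hd2pos (colSgn i ∘ S2)]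
      have hfs1 : (colSgn i ∘ S1) = fun _ : Fin d1 => (none : Option Bool) := by
        funext j
        simp only [Function.comp_apply, hS1col1 j, hnone]
      rw [hfs1, List.ofFn_const]
      simp only [Function.comp_apply, List.append_assoc, List.cons_append, hfalse]
    have hb2_first : ent (S2 ⟨0, hd2pos⟩) (k - 1) ≤ k + 2 := by
      by_contra hne
      push_neg at hne
      have hbn : ent (S2 ⟨0, hd2pos⟩) (k - 1) ≤ n := ent_le _ _ (by omega)
      have hsg : colSgn (ent (S2 ⟨0, hd2pos⟩) (k - 1) - 1) (S2 ⟨0, hd2pos⟩) = some false := by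
        rw [colSgn_solcol_high (hsol2 _) hk (by omega), if_pos (by omega)]
      have hnone : colSgn (ent (S2 ⟨0, hd2pos⟩) (k - 1) - 1)
          (col1 n k (by omega) (by omega)) = none := by
        rw [sgn_col1 hk (by omega) (by omega) (by omega) (by omega), if_neg (by omega)]
      exact viol _ (by omega) (by omega) (by omega) _ _
        (hmap2 _ (by omega) (by omega) hnone hsg)
        (by
          intro o ho
          simp only [List.mem_append, List.mem_replicate] at ho
          tauto)
    have ht2_first : k - 2 ≤ T2 ⟨0, hd2pos⟩ := by
      by_contra hne
      push_neg at hne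
      have h2le := hT2le ⟨0, hd2pos⟩
      have hsg : colSgn (T2 ⟨0, hd2pos⟩ + 1) (S2 ⟨0, hd2pos⟩) = some false := by
        rw [colSgn_solcol_low (hsol2 _) hk (hT2le _) (hT2char _) (by omega) (by omega),
          if_pos rfl]
      have hnone : colSgn (T2 ⟨0, hd2pos⟩ + 1) (col1 n k (by omega) (by omega)) = none := by
        rw [sgn_col1 hk (by omega) (by omega) (by omega) (by omega), if_neg (by omega)]
      exact viol _ (by omega) (by omega) (by omega) _ _
        (hmap2 _ (by omega) (by omega) hnone hsg)
        (by
          intro o ho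
          simp only [List.mem_append, List.mem_replicate] at ho
          tauto)
    have hT2mono : ∀ (a b : Fin d2), a.1 ≤ b.1 → T2 a ≤ T2 b := fun a b hab =>
      t_mono hk (hT2char a) (hT2char b) (fun m => soliton_ent_anti hS2 a b hab m)
        (hT2le a) (hT2le b)
    have hball2 : ∀ j : Fin d2, k - 2 ≤ T2 j ∧ T2 j ≤ k - 1 := fun j =>
      ⟨le_trans ht2_first (hT2mono _ _ (Nat.zero_le _)), hT2le j⟩
    have hbbounds : ∀ j : Fin d2, k < ent (S2 j) (k - 1) ∧ ent (S2 j) (k - 1) ≤ k + 2 :=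
      fun j => ⟨solcol_bot (hsol2 j) (by omega),
        le_trans (soliton_ent_anti hS2 ⟨0, hd2pos⟩ j (Nat.zero_le _) _) hb2_first⟩
    obtain ⟨x, hxd2, hxlow, hxhigh⟩ : ∃ x, x ≤ d2 ∧
        (∀ (j : Fin d2), j.1 < x → ent (S2 j) (k - 1) = k + 2) ∧
        (∀ (j : Fin d2), x ≤ j.1 → ent (S2 j) (k - 1) = k + 1) := by
      by_cases hx : ∃ m : ℕ, ∃ hm : m < d2, ent (S2 ⟨m, hm⟩) (k - 1) = k + 1
      · refine ⟨Nat.find hx, ?_, ?_, ?_⟩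
        · obtain ⟨hm, _⟩ := Nat.find_spec hx
          omega
        · intro j hj
          have hmin := Nat.find_min hx hj
          simp only [not_exists] at hmin
          have h6 : ent (S2 j) (k - 1) ≠ k + 1 := hmin j.isLt
          have := hbbounds j
          omega
        · intro j hjx
          obtain ⟨hm, hv⟩ := Nat.find_spec hx
          have h5 : ent (S2 j) (k - 1) ≤ ent (S2 ⟨Nat.find hx, hm⟩) (k - 1) :=
            soliton_ent_anti hS2 ⟨Nat.find hx, hm⟩ j hjx _
          have := hbbounds j
          omega
      · push_neg at hx
        refine ⟨d2, le_refl _, ?_, ?_⟩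
        · intro j _
          have h6 : ent (S2 j) (k - 1) ≠ k + 1 := hx j.1 j.isLt
          have := hbbounds j
          omega
        · intro j hj
          have := j.isLt
          omega
    obtain ⟨y, hyd2, hylow, hyhigh⟩ : ∃ y, y ≤ d2 ∧
        (∀ (j : Fin d2), j.1 < y → T2 j = k - 2) ∧
        (∀ (j : Fin d2), y ≤ j.1 → T2 j = k - 1) := by
      by_cases hy : ∃ m : ℕ, ∃ hm : m < d2, T2 ⟨m, hm⟩ = k - 1
      · refine ⟨Nat.find hy, ?_, ?_, ?_⟩
        · obtain ⟨hm, _⟩ := Nat.find_spec hy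
          omega
        · intro j hj
          have hmin := Nat.find_min hy hj
          simp only [not_exists] at hmin
          have h6 : T2 j ≠ k - 1 := hmin j.isLt
          have := hball2 j
          omega
        · intro j hjy
          obtain ⟨hm, hv⟩ := Nat.find_spec hy
          have h5 : T2 ⟨Nat.find hy, hm⟩ ≤ T2 j := hT2mono _ _ hjy
          have := hball2 j
          omega
      · push_neg at hy
        refine ⟨d2, le_refl _, ?_, ?_⟩
        · intro j _
          have h6 : T2 j ≠ k - 1 := hy j.1 j.isLt
          have := hball2 j
          omega
        · intro j hj
          have := j.isLt
          omega
    rcases le_or_gt x y with hxy | hyx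
    · refine ⟨x, d2 - y, true, by omega, hS1col1, ?_⟩
      intro j
      by_cases h1 : j.1 < x
      · rw [if_pos h1]
        have hc := hT2char j
        rw [hylow j (by omega)] at hc
        exact eq_mkCol hk hc (hxlow j h1) (Or.inr ⟨rfl, rfl⟩) (by omega) (by omega) (by omega)
      · rw [if_neg h1]
        by_cases h2' : j.1 < d2 - (d2 - y)
        · rw [if_pos h2', if_pos rfl]
          have hc := hT2char j
          rw [hylow j (by omega)] at hc
          exact eq_mkCol hk hc (hxhigh j (by omega)) (Or.inr ⟨rfl, rfl⟩) (by omega) (by omega)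
            (by omega)
        · rw [if_neg h2']
          have hc := hT2char j
          rw [hyhigh j (by omega)] at hc
          exact eq_mkCol hk hc (hxhigh j (by omega)) (Or.inl ⟨rfl, rfl⟩) (by omega) (by omega)
            (by omega)
    · refine ⟨y, d2 - x, false, by omega, hS1col1, ?_⟩
      intro j
      by_cases h1 : j.1 < y
      · rw [if_pos h1]
        have hc := hT2char j
        rw [hylow j h1] at hc
        exact eq_mkCol hk hc (hxlow j (by omega)) (Or.inr ⟨rfl, rfl⟩) (by omega) (by omega)
          (by omega)
      · rw [if_neg h1]
        by_cases h2' : j.1 < d2 - (d2 - x)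
        · rw [if_pos h2', if_neg (by simp)]
          have hc := hT2char j
          rw [hyhigh j (by omega)] at hc
          exact eq_mkCol hk hc (hxlow j (by omega)) (Or.inl ⟨rfl, rfl⟩) (by omega) (by omega)
            (by omega)
        · rw [if_neg h2']
          have hc := hT2char j
          rw [hyhigh j (by omega)] at hc
          exact eq_mkCol hk hc (hxhigh j (by omega)) (Or.inl ⟨rfl, rfl⟩) (by omega) (by omega)
            (by omega)
  · -- backward direction
    rintro ⟨α, β, s, hab, hS1e, hS2e⟩ i hi1 hin hik
    rw [eList_eq_none_iff (by omega) hi1]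
    rw [List.map_append, List.map_append, List.map_append, List.map_append,
      List.map_replicate, List.map_replicate, List.map_replicate, List.map_ofFn,
      List.map_ofFn, colSgn_col0 (by omega) (by omega) hi1 hik]
    have hfS1 : (colSgn i ∘ S1)
        = fun _ : Fin d1 => colSgn i (col1 n k (by omega) (by omega)) := by
      funext j
      simp only [Function.comp_apply, hS1e j]
    rw [hfS1, List.ofFn_const]
    have hfS2 : (colSgn i ∘ S2) = fun j : Fin d2 =>
        if j.1 < α then colSgn i (col3 n k (by omega) (by omega))
        else if j.1 < d2 - β then
          colSgn i (if s then col2p n k (by omega) (by omega)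
            else col2m n k (by omega) (by omega))
        else colSgn i (col1 n k (by omega) (by omega)) := by
      funext j
      simp only [Function.comp_apply, hS2e j]
      split_ifs <;> rfl
    rw [hfS2, ofFn_ite3 _ _ _ (by omega) (by omega)]
    have v1 : colSgn i (col1 n k (by omega) (by omega))
        = if i = k - 1 ∨ i = k + 1 then some true else none :=
      sgn_col1 hk hi1 hik (by omega) (by omega)
    have v3 : colSgn i (col3 n k (by omega) (by omega))
        = if i = k - 2 ∨ i = k + 2 then some true
          else if i = k - 1 ∨ i = k + 1 then some false else none :=
      sgn_col3 hk hi1 hik (by omega) (by omega)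
    have v2 : colSgn i (if s then col2p n k (by omega) (by omega)
        else col2m n k (by omega) (by omega)) = some false → (i = k - 1 ∨ i = k + 1) := by
      intro hc
      rcases s with _ | _
      · rw [if_neg (by simp), sgn_col2m hk hi1 hik (by omega) (by omega)] at hc
        by_cases hc1 : i = k - 1 ∨ i = k + 2
        · rw [if_pos hc1] at hc
          exact absurd hc (by simp)
        · rw [if_neg hc1] at hc
          by_cases hc2 : i = k + 1
          · exact Or.inr hc2
          · rw [if_neg hc2] at hc
            exact absurd hc (by simp)
      · rw [if_pos rfl, sgn_col2p hk hi1 hik (by omega) (by omega)] at hc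
        by_cases hc1 : i = k - 2 ∨ i = k + 1
        · rw [if_pos hc1] at hc
          exact absurd hc (by simp)
        · rw [if_neg hc1] at hc
          by_cases hc2 : i = k - 1
          · exact Or.inl hc2
          · rw [if_neg hc2] at hc
            exact absurd hc (by simp)
    by_cases hcat : i = k - 1 ∨ i = k + 1
    · -- pluses from the first soliton cover all minuses
      have v1t : colSgn i (col1 n k (by omega) (by omega)) = some true := by
        rw [v1, if_pos hcat]
      rw [v1t]
      have hsplit :
          (List.replicate c1 (none : Option Bool) ++ List.replicate d1 (some true) ++
            List.replicate (c2 - c1 - d1) none ++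
            (List.replicate α (colSgn i (col3 n k (by omega) (by omega))) ++
              List.replicate (d2 - β - α) (colSgn i (if s then col2p n k (by omega) (by omega)
                else col2m n k (by omega) (by omega))) ++
              List.replicate (d2 - (d2 - β)) (some true)) ++
            List.replicate h2 none)
          = (List.replicate c1 (none : Option Bool) ++ (List.replicate d1 (some true) ++
              List.replicate (c2 - c1 - d1) none)) ++
            (List.replicate α (colSgn i (col3 n k (by omega) (by omega))) ++
              (List.replicate (d2 - β - α) (colSgn i (if s then col2p n k (by omega) (by omega)
                else col2m n k (by omega) (by omega))) ++
              List.replicate (d2 - (d2 - β)) (some true))) ++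
            List.replicate h2 none := by
        simp only [List.append_assoc]
      rw [hsplit]
      apply ballot_zero
      · intro hmem
        simp only [List.mem_append, List.mem_replicate] at hmem
        rcases hmem with (⟨_, hmem⟩ | ⟨_, hmem⟩ | ⟨_, hmem⟩) <;> exact absurd hmem (by simp)
      · intro hmem
        simp only [List.mem_replicate] at hmem
        exact absurd hmem.2 (by simp)
      · simp only [List.length_append, List.length_replicate, List.count_append,
          List.count_replicate]
        norm_num
        omega
    · -- no minuses at all
      rw [foldl_applyS_nofalse]
      · intro hmem
        simp only [List.mem_append, List.mem_replicate] at hmem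
        have v1f : colSgn i (col1 n k (by omega) (by omega)) ≠ some false := by
          rw [v1]
          split_ifs <;> simp
        have v3f : colSgn i (col3 n k (by omega) (by omega)) ≠ some false := by
          rw [v3]
          by_cases hc1 : i = k - 2 ∨ i = k + 2
          · rw [if_pos hc1]
            simp
          · rw [if_neg hc1, if_neg hcat]
            simp
        have v2f : colSgn i (if s then col2p n k (by omega) (by omega)
            else col2m n k (by omega) (by omega)) ≠ some false := fun hc => hcat (v2 hc)
        rcases hmem with ((((⟨_, hmem⟩ | ⟨_, hmem⟩) | ⟨_, hmem⟩) |
          ((⟨_, hmem⟩ | ⟨_, hmem⟩) | ⟨_, hmem⟩)) | ⟨_, hmem⟩)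
        · exact absurd hmem (by simp)
        · exact v1f hmem.symm
        · exact absurd hmem (by simp)
        · exact v3f hmem.symm
        · exact v2f hmem.symm
        · exact v1f hmem.symm
        · exact absurd hmem (by simp)
end
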